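/- arXiv:2002.01645 — 5 statements merged into one kernel-verified Lean document; each statement's English description precedes it below -/
import Mathlib

section
/- Under the weighted stochastic block model sample with common communities and the linear response model, the expectation of the matrix Σ̂^{A,Y} = (1/N)∑_{m=1}^N Y_m A^{(m)} satisfies E[Σ̂^{A,Y}] = Z F Zᵀ − diag(Z F Zᵀ), where F ∈ ℝ^{K×K} is the symmetric matrix with entries F_{jk} = 2 Ψ_{jk} C_{jk} + 2 ∑_{(s,t)∈P} ((1/N)∑_{m=1}^N R^{(m)}_{jk} R^{(m)}_{z_s z_t}) C_{z_s z_t}, and diag(M) denotes the diagonal matrix with the same diagonal as M. -/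
open MeasureTheory ProbabilityTheory Matrix BigOperators

/-- Product of two `L²` functions is integrable. -/
lemma integrable_mul_of_memL2 {Ω : Type*} [MeasurableSpace Ω] {μ : Measure Ω}
    {f g : Ω → ℝ} (hf : MemLp f 2 μ) (hg : MemLp g 2 μ) :
    Integrable (fun ω => f ω * g ω) μ := by
  have h1 := (hf.add hg).integrable_sq
  have h2 := hf.integrable_sq
  have h3 := hg.integrable_sq
  have h : Integrable (fun ω => (((f + g) ω) ^ 2 - f ω ^ 2 - g ω ^ 2) / 2) μ :=
    ((h1.sub h2).sub h3).div_const 2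
  refine h.congr (Filter.Eventually.of_forall fun ω => ?_)
  simp only [Pi.add_apply]
  ring

/-- A sum over all ordered pairs, vanishing on the diagonal, of a symmetric function equals
twice the sum over pairs `p.1 < p.2`. -/
lemma double_sum_eq_two_mul_pairs {n : ℕ} (f : Fin n → Fin n → ℝ)
    (hf : ∀ s t, f s t = f t s) :
    (∑ s : Fin n, ∑ t : Fin n, (if s = t then (0:ℝ) else f s t))
      = 2 * ∑ p ∈ Finset.univ.filter (fun p : Fin n × Fin n => p.1 < p.2), f p.1 p.2 := by
  classical
  rw [← Finset.sum_product']
  have h1 : ∀ p : Fin n × Fin n,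
      (if p.1 = p.2 then (0:ℝ) else f p.1 p.2) = if p.1 ≠ p.2 then f p.1 p.2 else 0 := by
    intro p; by_cases h : p.1 = p.2 <;> simp [h]
  simp_rw [h1, ← Finset.sum_filter]
  have hsplit : (Finset.univ ×ˢ Finset.univ).filter (fun p : Fin n × Fin n => p.1 ≠ p.2)
      = Finset.univ.filter (fun p : Fin n × Fin n => p.1 < p.2)
        ∪ Finset.univ.filter (fun p : Fin n × Fin n => p.2 < p.1) := by
    ext p
    simp only [Finset.mem_filter, Finset.mem_union, Finset.mem_product, Finset.mem_univ,
      true_and, and_true, ne_eq]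
    constructor
    · intro h; exact lt_or_gt_of_ne h
    · rintro (h | h)
      · exact ne_of_lt h
      · exact (ne_of_lt h).symm
  have hdisj : Disjoint (Finset.univ.filter (fun p : Fin n × Fin n => p.1 < p.2))
      (Finset.univ.filter (fun p : Fin n × Fin n => p.2 < p.1)) := by
    rw [Finset.disjoint_left]
    intro p hp hq
    simp only [Finset.mem_filter] at hp hq
    exact absurd hq.2 (not_lt_of_gt hp.2)
  rw [hsplit, Finset.sum_union hdisj]
  have hswap : ∑ p ∈ Finset.univ.filter (fun p : Fin n × Fin n => p.2 < p.1), f p.1 p.2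
      = ∑ p ∈ Finset.univ.filter (fun p : Fin n × Fin n => p.1 < p.2), f p.1 p.2 := by
    refine Finset.sum_nbij' Prod.swap Prod.swap ?_ ?_ ?_ ?_ ?_
    · intro p hp; simp only [Finset.mem_filter, Finset.mem_univ, true_and] at hp ⊢
      exact hp
    · intro p hp; simp only [Finset.mem_filter, Finset.mem_univ, true_and] at hp ⊢
      exact hp
    · intro p _; rfl
    · intro p _; rfl
    · intro p _; exact hf p.1 p.2
  rw [hswap]; ring

/-- **Proposition 1** (expected value of the marginal covariance matrix).
Under a weighted stochastic block model sample with common communities and a linear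
response model with block-constant coefficients, the expectation of
`Σ̂^{A,Y} = (1/N) ∑ₘ Yₘ A⁽ᵐ⁾` equals `Z F Zᵀ - diag(Z F Zᵀ)`. -/
theorem expected_sigma_AY
    {Ω : Type*} [MeasurableSpace Ω] (μ : Measure Ω) [IsProbabilityMeasure μ]
    (N n K : ℕ) (hN : 1 ≤ N) (hn : 2 ≤ n) (hK : 1 ≤ K)
    (z : Fin n → Fin K)
    (Z : Matrix (Fin n) (Fin K) ℝ)
    (hZ : ∀ u k, Z u k = if z u = k then 1 else 0)
    (R Ψ : Fin N → Matrix (Fin K) (Fin K) ℝ)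
    (hRsym : ∀ m, (R m).IsSymm) (hΨsym : ∀ m, (Ψ m).IsSymm)
    (C : Matrix (Fin K) (Fin K) ℝ) (hCsym : C.IsSymm)
    (B : Matrix (Fin n) (Fin n) ℝ) (hB : B = Z * C * Zᵀ)
    (σ : ℝ) (hσ : 0 < σ)
    (A : Fin N → Ω → Matrix (Fin n) (Fin n) ℝ)
    (ε : Fin N → Ω → ℝ)
    (Y : Fin N → Ω → ℝ)
    -- symmetry and zero diagonal of the adjacency matrices
    (hAsym : ∀ m ω, (A m ω).IsSymm)
    (hAdiag : ∀ m ω u, A m ω u u = 0)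
    -- square integrability of the edge variables
    (hAL2 : ∀ m (u v : Fin n), MemLp (fun ω => A m ω u v) 2 μ)
    -- means and variances of the edge variables
    (hAmean : ∀ m (u v : Fin n), u < v → (∫ ω, A m ω u v ∂μ) = R m (z u) (z v))
    (hAvar : ∀ m (u v : Fin n), u < v →
      variance (fun ω => A m ω u v) μ = Ψ m (z u) (z v))
    -- noise variables: integrable and centered
    (hεint : ∀ m, Integrable (ε m) μ)
    (hεmean : ∀ m, (∫ ω, ε m ω ∂μ) = 0)
    -- joint independence of all edge variables and all noise variables
    (hIndep : iIndepFun
      (Sum.elim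
        (fun q : (Fin N × {p : Fin n × Fin n // p.1 < p.2}) =>
          fun ω => A q.1 ω q.2.1.1 q.2.1.2)
        (fun m => ε m)) μ)
    -- the linear response model
    (hY : ∀ m ω, Y m ω = Matrix.trace (Bᵀ * A m ω) + σ * ε m ω)
    -- the matrix F
    (F : Matrix (Fin K) (Fin K) ℝ)
    (hF : ∀ j k, F j k = 2 * ((1 / (N : ℝ)) * ∑ m, Ψ m j k) * C j k
      + 2 * ∑ p ∈ Finset.univ.filter (fun p : Fin n × Fin n => p.1 < p.2),
          ((1 / (N : ℝ)) * ∑ m, R m j k * R m (z p.1) (z p.2)) * C (z p.1) (z p.2)) :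
    Matrix.of (fun u v => ∫ ω, (1 / (N : ℝ)) * ∑ m, Y m ω * A m ω u v ∂μ)
      = Z * F * Zᵀ - Matrix.diagonal (fun u => (Z * F * Zᵀ) u u) := by
  classical
  -- entries of Z G Zᵀ
  have hZG : ∀ (G : Matrix (Fin K) (Fin K) ℝ) (u v : Fin n),
      (Z * G * Zᵀ) u v = G (z u) (z v) := by
    intro G u v
    simp only [Matrix.mul_apply, Matrix.transpose_apply, hZ, Finset.sum_mul, ite_mul, one_mul,
      zero_mul, mul_ite, mul_one, mul_zero]
    simp [Finset.sum_ite_eq]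
  -- entries of B
  have hBe : ∀ s t : Fin n, B s t = C (z s) (z t) := by
    intro s t; rw [hB]; exact hZG C s t
  -- symmetry facts
  have hAs : ∀ m ω (s t : Fin n), A m ω s t = A m ω t s := fun m ω s t =>
    (hAsym m ω).apply t s
  have hRs : ∀ m (j k : Fin K), R m j k = R m k j := fun m j k =>
    (hRsym m).apply k j
  have hΨs : ∀ m (j k : Fin K), Ψ m j k = Ψ m k j := fun m j k =>
    (hΨsym m).apply k j
  have hCs : ∀ (j k : Fin K), C j k = C k j := fun j k => hCsym.apply k j
  have hFsym : ∀ j k, F j k = F k j := by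
    intro j k
    rw [hF, hF]
    congr 1
    · rw [Finset.sum_congr rfl (fun m _ => hΨs m j k), hCs j k]
    · congr 1
      refine Finset.sum_congr rfl fun p _ => ?_
      rw [Finset.sum_congr rfl (fun m _ => by rw [hRs m j k])]
  have huvne : ∀ (u v : Fin n), u < v → (z u ≠ z v ∨ True) := fun _ _ _ => Or.inr trivial
  -- expansion of the response times an edge variable
  have hexp : ∀ m (u v : Fin n) ω, Y m ω * A m ω u v
      = (∑ s : Fin n, ∑ t : Fin n, B s t * (A m ω s t * A m ω u v))
        + σ * (ε m ω * A m ω u v) := by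
    intro m u v ω
    rw [hY]
    have htr : Matrix.trace (Bᵀ * A m ω) = ∑ s : Fin n, ∑ t : Fin n, B s t * A m ω s t := by
      simp only [Matrix.trace, Matrix.diag_apply, Matrix.mul_apply, Matrix.transpose_apply]
      rw [Finset.sum_comm]
    rw [htr, add_mul, Finset.sum_mul]
    congr 1
    · refine Finset.sum_congr rfl fun s _ => ?_
      rw [Finset.sum_mul]
      exact Finset.sum_congr rfl fun t _ => by ring
    · ring
  -- integrability of products of edge variables
  have hprod : ∀ m (s t u v : Fin n), Integrable (fun ω => A m ω s t * A m ω u v) μ :=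
    fun m s t u v => integrable_mul_of_memL2 (hAL2 m s t) (hAL2 m u v)
  -- independence and integrability for the noise terms
  have hindε : ∀ m (u v : Fin n), u < v → IndepFun (ε m) (fun ω => A m ω u v) μ := by
    intro m u v huv
    have h := hIndep.indepFun (i := Sum.inr m) (j := Sum.inl (m, ⟨(u, v), huv⟩)) (by simp)
    exact h
  have hεg : ∀ m (u v : Fin n), u < v → Integrable (fun ω => ε m ω * A m ω u v) μ := by
    intro m u v huv
    exact (hindε m u v huv).integrable_mul (hεint m) ((hAL2 m u v).integrable one_le_two)
  -- integrability of the full integrand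
  have hYint : ∀ m (u v : Fin n), u < v → Integrable (fun ω => Y m ω * A m ω u v) μ := by
    intro m u v huv
    have he : (fun ω => Y m ω * A m ω u v)
        = fun ω => (∑ s : Fin n, ∑ t : Fin n, B s t * (A m ω s t * A m ω u v))
            + σ * (ε m ω * A m ω u v) := funext fun ω => hexp m u v ω
    rw [he]
    refine Integrable.add ?_ ((hεg m u v huv).const_mul σ)
    exact integrable_finset_sum _ fun s _ =>
      integrable_finset_sum _ fun t _ => (hprod m s t u v).const_mul _
  -- the per-sample expectation
  have hper : ∀ m (u v : Fin n), u < v → (∫ ω, Y m ω * A m ω u v ∂μ)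
      = (∑ s : Fin n, ∑ t : Fin n,
          (if s = t then (0:ℝ)
            else C (z s) (z t) * (R m (z s) (z t) * R m (z u) (z v))))
        + 2 * C (z u) (z v) * Ψ m (z u) (z v) := by
    intro m u v huv
    have hgint : Integrable (fun ω => A m ω u v) μ := (hAL2 m u v).integrable one_le_two
    -- second moment of the (u,v) edge
    have h2mom : (∫ ω, A m ω u v * A m ω u v ∂μ)
        = Ψ m (z u) (z v) + R m (z u) (z v) * R m (z u) (z v) := by
      have hd := variance_eq_sub (hAL2 m u v)
      rw [hAvar m u v huv, hAmean m u v huv] at hd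
      have he : μ[(fun ω => A m ω u v) ^ 2] = ∫ ω, A m ω u v * A m ω u v ∂μ := by
        refine integral_congr_ae (Filter.Eventually.of_forall fun ω => ?_)
        simp [sq]
      rw [he] at hd
      nlinarith [hd]
    -- expectation of a product of two edge variables, ordered case
    have key' : ∀ s t : Fin n, s < t → (∫ ω, A m ω s t * A m ω u v ∂μ)
        = R m (z s) (z t) * R m (z u) (z v)
          + (if s = u ∧ t = v then Ψ m (z u) (z v) else 0) := by
      intro s t hst
      by_cases hcase : s = u ∧ t = v
      · obtain ⟨rfl, rfl⟩ := hcase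
        rw [if_pos ⟨rfl, rfl⟩, h2mom]
        ring
      · have hne : (Sum.inl (m, ⟨(s, t), hst⟩) :
            (Fin N × {p : Fin n × Fin n // p.1 < p.2}) ⊕ Fin N)
            ≠ Sum.inl (m, ⟨(u, v), huv⟩) := by
          simp only [ne_eq, Sum.inl.injEq, Prod.mk.injEq, Subtype.mk.injEq]
          rintro ⟨-, h2⟩
          exact hcase h2
        have hind : IndepFun (fun ω => A m ω s t) (fun ω => A m ω u v) μ :=
          hIndep.indepFun hne
        rw [hind.integral_fun_mul_eq_mul_integral (hAL2 m s t).aestronglyMeasurable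
            hgint.aestronglyMeasurable, hAmean m s t hst, hAmean m u v huv, if_neg hcase]
        ring
    -- expectation of a product of two edge variables, general case
    have key : ∀ s t : Fin n, (∫ ω, A m ω s t * A m ω u v ∂μ)
        = (if s = t then (0:ℝ) else R m (z s) (z t) * R m (z u) (z v))
          + (if (s = u ∧ t = v) ∨ (s = v ∧ t = u) then Ψ m (z u) (z v) else 0) := by
      intro s t
      rcases lt_trichotomy s t with hst | rfl | hts
      · rw [key' s t hst, if_neg (ne_of_lt hst)]
        congr 1
        by_cases hc : s = u ∧ t = v
        · rw [if_pos hc, if_pos (Or.inl hc)]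
        · have hnot : ¬((s = u ∧ t = v) ∨ (s = v ∧ t = u)) := by
            rintro (h | ⟨rfl, rfl⟩)
            · exact hc h
            · exact absurd huv (not_lt_of_gt hst)
          rw [if_neg hc, if_neg hnot]
      · have hz : ∀ ω, A m ω s s * A m ω u v = 0 := fun ω => by rw [hAdiag]; ring
        rw [integral_congr_ae (Filter.Eventually.of_forall hz), integral_zero]
        have hnot : ¬((s = u ∧ s = v) ∨ (s = v ∧ s = u)) := by
          rintro (⟨rfl, rfl⟩ | ⟨rfl, rfl⟩) <;> exact absurd huv (lt_irrefl _)
        rw [if_pos rfl, if_neg hnot, add_zero]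
      · have he : (∫ ω, A m ω s t * A m ω u v ∂μ) = ∫ ω, A m ω t s * A m ω u v ∂μ := by
          refine integral_congr_ae (Filter.Eventually.of_forall fun ω => ?_)
          simp only [hAs m ω s t]
        rw [he, key' t s hts, if_neg (Ne.symm (ne_of_lt hts)), hRs m (z t) (z s)]
        congr 1
        by_cases hc : t = u ∧ s = v
        · rw [if_pos hc, if_pos (Or.inr ⟨hc.2, hc.1⟩)]
        · have hnot : ¬((s = u ∧ t = v) ∨ (s = v ∧ t = u)) := by
            rintro (⟨rfl, rfl⟩ | ⟨rfl, rfl⟩)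
            · exact absurd huv (not_lt_of_gt hts)
            · exact hc ⟨rfl, rfl⟩
          rw [if_neg hc, if_neg hnot]
    -- E[ε ⋅ A] = 0
    have hεg0 : (∫ ω, ε m ω * A m ω u v ∂μ) = 0 := by
      rw [(hindε m u v huv).integral_fun_mul_eq_mul_integral (hεint m).aestronglyMeasurable
          hgint.aestronglyMeasurable, hεmean]
      ring
    -- compute the integral
    have hsplit : (∫ ω, Y m ω * A m ω u v ∂μ)
        = (∑ s : Fin n, ∑ t : Fin n, B s t * ∫ ω, A m ω s t * A m ω u v ∂μ)
          + σ * ∫ ω, ε m ω * A m ω u v ∂μ := by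
      rw [integral_congr_ae (Filter.Eventually.of_forall (hexp m u v)),
        integral_add
          (integrable_finset_sum _ fun s _ =>
            integrable_finset_sum _ fun t _ => (hprod m s t u v).const_mul (B s t))
          ((hεg m u v huv).const_mul σ),
        integral_finset_sum _ (fun s _ =>
          integrable_finset_sum _ fun t _ => (hprod m s t u v).const_mul (B s t))]
      congr 1
      · refine Finset.sum_congr rfl fun s _ => ?_
        rw [integral_finset_sum _ (fun t _ => (hprod m s t u v).const_mul _)]
        exact Finset.sum_congr rfl fun t _ => integral_const_mul _ _
      · exact integral_const_mul _ _
    rw [hsplit, hεg0, mul_zero, add_zero]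
    -- plug in the per-pair expectations
    have hstep : ∀ s t : Fin n, B s t * (∫ ω, A m ω s t * A m ω u v ∂μ)
        = (if s = t then (0:ℝ) else C (z s) (z t) * (R m (z s) (z t) * R m (z u) (z v)))
          + ((if s = u ∧ t = v then C (z u) (z v) * Ψ m (z u) (z v) else 0)
            + (if s = v ∧ t = u then C (z v) (z u) * Ψ m (z u) (z v) else 0)) := by
      intro s t
      rw [key s t, hBe s t, mul_add]
      congr 1
      · by_cases h : s = t
        · simp [h]
        · rw [if_neg h, if_neg h]
      · by_cases h1 : s = u ∧ t = v
        · have h2 : ¬(s = v ∧ t = u) := fun h => (ne_of_lt huv) (h1.1.symm.trans h.1)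
          rw [if_pos (Or.inl h1), if_pos h1, if_neg h2, add_zero, h1.1, h1.2]
        · by_cases h2 : s = v ∧ t = u
          · rw [if_pos (Or.inr h2), if_neg h1, if_pos h2, zero_add, h2.1, h2.2]
          · rw [if_neg (by tauto), if_neg h1, if_neg h2, mul_zero, add_zero]
    calc (∑ s : Fin n, ∑ t : Fin n, B s t * ∫ ω, A m ω s t * A m ω u v ∂μ)
        = ∑ s : Fin n, ∑ t : Fin n,
            ((if s = t then (0:ℝ)
                else C (z s) (z t) * (R m (z s) (z t) * R m (z u) (z v)))
              + ((if s = u ∧ t = v then C (z u) (z v) * Ψ m (z u) (z v) else 0)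
                + (if s = v ∧ t = u then C (z v) (z u) * Ψ m (z u) (z v) else 0))) := by
          exact Finset.sum_congr rfl fun s _ => Finset.sum_congr rfl fun t _ => hstep s t
      _ = (∑ s : Fin n, ∑ t : Fin n,
            (if s = t then (0:ℝ)
              else C (z s) (z t) * (R m (z s) (z t) * R m (z u) (z v))))
          + ((∑ s : Fin n, ∑ t : Fin n,
              (if s = u ∧ t = v then C (z u) (z v) * Ψ m (z u) (z v) else 0))
            + (∑ s : Fin n, ∑ t : Fin n,
              (if s = v ∧ t = u then C (z v) (z u) * Ψ m (z u) (z v) else 0))) := by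
          simp [Finset.sum_add_distrib]
      _ = (∑ s : Fin n, ∑ t : Fin n,
            (if s = t then (0:ℝ)
              else C (z s) (z t) * (R m (z s) (z t) * R m (z u) (z v))))
          + 2 * C (z u) (z v) * Ψ m (z u) (z v) := by
          congr 1
          have e1 : (∑ s : Fin n, ∑ t : Fin n,
              (if s = u ∧ t = v then C (z u) (z v) * Ψ m (z u) (z v) else 0))
              = C (z u) (z v) * Ψ m (z u) (z v) := by
            simp [ite_and, Finset.sum_ite_eq, Finset.sum_ite_eq']
          have e2 : (∑ s : Fin n, ∑ t : Fin n,
              (if s = v ∧ t = u then C (z v) (z u) * Ψ m (z u) (z v) else 0))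
              = C (z v) (z u) * Ψ m (z u) (z v) := by
            simp [ite_and, Finset.sum_ite_eq, Finset.sum_ite_eq']
          rw [e1, e2, hCs (z v) (z u)]
          ring
  -- the main entry computation for u < v
  have main : ∀ (u v : Fin n), u < v →
      (∫ ω, (1 / (N : ℝ)) * ∑ m, Y m ω * A m ω u v ∂μ) = F (z u) (z v) := by
    intro u v huv
    rw [integral_const_mul, integral_finset_sum _ (fun m _ => hYint m u v huv)]
    rw [Finset.sum_congr rfl (fun m _ => hper m u v huv)]
    rw [Finset.sum_congr rfl (fun m (_ : m ∈ Finset.univ) =>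
      congrArg (· + 2 * C (z u) (z v) * Ψ m (z u) (z v))
        (double_sum_eq_two_mul_pairs
          (fun s t => C (z s) (z t) * (R m (z s) (z t) * R m (z u) (z v)))
          (fun s t => show C (z s) (z t) * (R m (z s) (z t) * R m (z u) (z v))
              = C (z t) (z s) * (R m (z t) (z s) * R m (z u) (z v)) from by
            rw [hCs (z s) (z t), hRs m (z s) (z t)])))]
    rw [hF]
    rw [Finset.sum_add_distrib]
    have e3 : (∑ m : Fin N, 2 * C (z u) (z v) * Ψ m (z u) (z v))
        = 2 * C (z u) (z v) * ∑ m : Fin N, Ψ m (z u) (z v) := by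
      rw [Finset.mul_sum]
    have e4 : (∑ m : Fin N, 2 * ∑ p ∈ Finset.univ.filter
          (fun p : Fin n × Fin n => p.1 < p.2),
          C (z p.1) (z p.2) * (R m (z p.1) (z p.2) * R m (z u) (z v)))
        = 2 * ∑ p ∈ Finset.univ.filter (fun p : Fin n × Fin n => p.1 < p.2),
            C (z p.1) (z p.2) * ∑ m : Fin N, R m (z u) (z v) * R m (z p.1) (z p.2) := by
      rw [← Finset.mul_sum, Finset.sum_comm]
      congr 1
      refine Finset.sum_congr rfl fun p _ => ?_
      rw [Finset.mul_sum]
      exact Finset.sum_congr rfl fun m _ => by ring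
    rw [e3, e4]
    rw [Finset.sum_congr rfl (fun p (_ : p ∈ Finset.univ.filter
        (fun p : Fin n × Fin n => p.1 < p.2)) => show
        ((1 / (N : ℝ)) * ∑ m : Fin N, R m (z u) (z v) * R m (z p.1) (z p.2))
            * C (z p.1) (z p.2)
        = (1 / (N : ℝ)) * (C (z p.1) (z p.2)
            * ∑ m : Fin N, R m (z u) (z v) * R m (z p.1) (z p.2)) from by ring)]
    rw [← Finset.mul_sum]
    ring
  -- conclude, entry by entry
  ext u v
  simp only [Matrix.of_apply, Matrix.sub_apply, Matrix.diagonal_apply]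
  rcases lt_trichotomy u v with h | rfl | h
  · rw [main u v h, hZG, if_neg (ne_of_lt h), sub_zero]
  · have hz : ∀ ω, (1 / (N : ℝ)) * ∑ m, Y m ω * A m ω u u = 0 := by
      intro ω; simp [hAdiag]
    rw [integral_congr_ae (Filter.Eventually.of_forall hz), integral_zero, if_pos rfl]
    ring
  · have heq : (∫ ω, (1 / (N : ℝ)) * ∑ m, Y m ω * A m ω u v ∂μ)
        = ∫ ω, (1 / (N : ℝ)) * ∑ m, Y m ω * A m ω v u ∂μ := by
      refine integral_congr_ae (Filter.Eventually.of_forall fun ω => ?_)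
      show (1 / (N : ℝ)) * ∑ m, Y m ω * A m ω u v
          = (1 / (N : ℝ)) * ∑ m, Y m ω * A m ω v u
      congr 1
      exact Finset.sum_congr rfl fun m _ => by rw [hAs m ω u v]
    rw [heq, main v u h, hZG, hFsym (z v) (z u), if_neg (Ne.symm (ne_of_lt h)), sub_zero]
end

section
/- The symmetric matrix J satisfies the identity 2J = Θ (Π ∘ C′) Θ − D, where Θ = diag(n_1,…,n_K), D is the diagonal matrix with D_{jj} = n_j Π_{jj} C′_{jj}, and ∘ is the Hadamard product; consequently every eigenvalue μ of J satisfies 2|μ| ≥ n_min² · min_{1≤i≤K} |λ_i(Π ∘ C′)| − n_max · max_{1≤j≤K} |Π_{jj} C′_{jj}|, where λ_1(·),…,λ_K(·) denote the eigenvalues of a symmetric K×K matrix. -/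
open Matrix BigOperators


lemma count_offdiag {n K : ℕ} (z : Fin n → Fin K) (j k : Fin K) (hjk : j ≠ k) :
    (Finset.univ.filter (fun p : Fin n × Fin n => p.1 < p.2 ∧
        ((z p.1 = j ∧ z p.2 = k) ∨ (z p.1 = k ∧ z p.2 = j)))).card =
    (Finset.univ.filter (fun u : Fin n => z u = j)).card *
    (Finset.univ.filter (fun u : Fin n => z u = k)).card := by
  rw [← Finset.card_product, ← Finset.filter_product]
  refine Finset.card_nbij' (fun p => if z p.1 = j then p else (p.2, p.1))
    (fun p => if p.1 < p.2 then p else (p.2, p.1)) ?_ ?_ ?_ ?_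
  · rintro ⟨s, t⟩ hm
    simp only [Finset.mem_coe, Finset.mem_filter, Finset.mem_univ, true_and, Finset.mem_product] at hm ⊢
    obtain ⟨hlt, h | h⟩ := hm
    · rw [if_pos h.1]; exact ⟨h.1, h.2⟩
    · have hs : ¬ z s = j := by rw [h.1]; exact hjk.symm
      rw [if_neg hs]; exact ⟨h.2, h.1⟩
  · rintro ⟨a, b⟩ hm
    simp only [Finset.mem_coe, Finset.mem_filter, Finset.mem_univ, true_and, Finset.mem_product] at hm ⊢
    obtain ⟨ha, hb⟩ := hm
    have hab : a ≠ b := fun h => hjk (by rw [← ha, h, hb])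
    rcases lt_or_gt_of_ne hab with h | h
    · rw [if_pos h]; exact ⟨h, Or.inl ⟨ha, hb⟩⟩
    · rw [if_neg (not_lt.2 h.le)]; exact ⟨h, Or.inr ⟨hb, ha⟩⟩
  · rintro ⟨s, t⟩ hm
    simp only [Finset.mem_coe, Finset.mem_filter, Finset.mem_univ, true_and] at hm
    obtain ⟨hlt, -⟩ := hm
    by_cases h : z s = j
    · simp [h, hlt]
    · simp [h, not_lt.2 hlt.le]
  · rintro ⟨a, b⟩ hm
    simp only [Finset.mem_coe, Finset.mem_filter, Finset.mem_univ, true_and, Finset.mem_product] at hm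
    have ha : z a = j := hm.1
    have hb : z b = k := hm.2
    have hab : a ≠ b := fun h => hjk (by rw [← ha, h, hb])
    have hbj : ¬ z b = j := by rw [hb]; exact hjk.symm
    rcases lt_or_gt_of_ne hab with h | h
    · simp [h, ha]
    · simp [not_lt.2 h.le, hbj]

lemma count_diag {n K : ℕ} (z : Fin n → Fin K) (j : Fin K) :
    2 * (Finset.univ.filter (fun p : Fin n × Fin n => p.1 < p.2 ∧
        ((z p.1 = j ∧ z p.2 = j) ∨ (z p.1 = j ∧ z p.2 = j)))).card
      + (Finset.univ.filter (fun u : Fin n => z u = j)).card =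
    (Finset.univ.filter (fun u : Fin n => z u = j)).card *
    (Finset.univ.filter (fun u : Fin n => z u = j)).card := by
  set A := Finset.univ.filter (fun u : Fin n => z u = j) with hA
  have hset : (Finset.univ.filter (fun p : Fin n × Fin n => p.1 < p.2 ∧
        ((z p.1 = j ∧ z p.2 = j) ∨ (z p.1 = j ∧ z p.2 = j)))) =
      (A ×ˢ A).filter (fun p => p.1 < p.2) := by
    ext ⟨s, t⟩
    simp only [Finset.mem_filter, Finset.mem_univ, true_and, Finset.mem_product, hA, or_self]
    tauto
  rw [hset, ← Finset.card_product]
  have hswap : ((A ×ˢ A).filter (fun p => p.1 < p.2)).card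
      = ((A ×ˢ A).filter (fun p => p.2 < p.1)).card := by
    refine Finset.card_nbij' Prod.swap Prod.swap ?_ ?_ ?_ ?_ <;>
      simp +contextual [Set.MapsTo, Set.LeftInvOn, Set.RightInvOn, Set.EqOn, Finset.mem_filter, Finset.mem_product, and_comm]
  have hdiagc : ((A ×ˢ A).filter (fun p => p.1 = p.2)).card = A.card := by
    have : ((A ×ˢ A).filter (fun p => p.1 = p.2)) = A.diag := by
      ext ⟨s, t⟩
      simp only [Finset.mem_filter, Finset.mem_product, Finset.mem_diag]
      constructor
      · rintro ⟨⟨h1, -⟩, h3⟩; exact ⟨h1, h3⟩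
      · rintro ⟨h1, h3⟩; exact ⟨⟨h1, h3 ▸ h1⟩, h3⟩
    rw [this, Finset.diag_card]
  have h1 : ((A ×ˢ A).filter (fun p => p.1 < p.2)).card
      + ((A ×ˢ A).filter (fun p => ¬ p.1 < p.2)).card = (A ×ˢ A).card :=
    Finset.card_filter_add_card_filter_not _
  have h2 : ((A ×ˢ A).filter (fun p => ¬ p.1 < p.2)).card
      = ((A ×ˢ A).filter (fun p => p.1 = p.2)).card
        + ((A ×ˢ A).filter (fun p => p.2 < p.1)).card := by
    rw [← Finset.card_union_of_disjoint]
    · congr 1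
      ext ⟨s, t⟩
      simp only [Finset.mem_filter, Finset.mem_union]
      constructor
      · rintro ⟨hm, hnl⟩
        rcases eq_or_lt_of_le (not_lt.1 hnl) with h | h
        · exact Or.inl ⟨hm, h.symm⟩
        · exact Or.inr ⟨hm, h⟩
      · rintro (⟨hm, h⟩ | ⟨hm, h⟩)
        · exact ⟨hm, by simp [h]⟩
        · exact ⟨hm, not_lt.2 h.le⟩
    · rw [Finset.disjoint_filter]
      rintro ⟨s, t⟩ hm heq
      simp only at heq ⊢
      rw [heq]
      exact lt_irrefl t
  omega

noncomputable def euclNorm {K : ℕ} (y : Fin K → ℝ) : ℝ :=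
  ‖(WithLp.equiv 2 (Fin K → ℝ)).symm y‖

lemma euclNorm_eq {K : ℕ} (y : Fin K → ℝ) : euclNorm y = Real.sqrt (∑ i, (y i) ^ 2) := by
  rw [euclNorm, EuclideanSpace.norm_eq]
  congr 1
  apply Finset.sum_congr rfl
  intro i _
  rw [Real.norm_eq_abs, sq_abs]; rfl

lemma euclNorm_nonneg {K : ℕ} (y : Fin K → ℝ) : 0 ≤ euclNorm y := norm_nonneg _

lemma euclNorm_pos {K : ℕ} {y : Fin K → ℝ} (hy : y ≠ 0) : 0 < euclNorm y := by
  rw [euclNorm, norm_pos_iff]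
  intro h
  exact hy ((WithLp.equiv 2 (Fin K → ℝ)).symm.injective (by simpa using h))

lemma euclNorm_add_le {K : ℕ} (x y : Fin K → ℝ) : euclNorm (x + y) ≤ euclNorm x + euclNorm y := by
  rw [euclNorm, euclNorm, euclNorm, WithLp.equiv_symm_apply, WithLp.toLp_add]
  exact norm_add_le _ _

lemma euclNorm_smul {K : ℕ} (c : ℝ) (y : Fin K → ℝ) : euclNorm (c • y) = |c| * euclNorm y := by
  rw [euclNorm, euclNorm, WithLp.equiv_symm_apply, WithLp.toLp_smul, norm_smul, Real.norm_eq_abs]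

lemma euclNorm_diag_lower {K : ℕ} (d : Fin K → ℝ) (c : ℝ) (hc : 0 ≤ c)
    (h : ∀ i, c ≤ |d i|) (y : Fin K → ℝ) :
    c * euclNorm y ≤ euclNorm ((Matrix.diagonal d) *ᵥ y) := by
  rw [euclNorm_eq, euclNorm_eq, ← Real.sqrt_sq hc, ← Real.sqrt_mul (sq_nonneg c)]
  apply Real.sqrt_le_sqrt
  rw [Finset.mul_sum]
  apply Finset.sum_le_sum
  intro i _
  rw [Matrix.mulVec_diagonal, mul_pow]
  have h1 : c ^ 2 ≤ (d i) ^ 2 := by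
    rw [← sq_abs (d i)]
    exact pow_le_pow_left₀ hc (h i) 2
  exact mul_le_mul_of_nonneg_right h1 (sq_nonneg _)

lemma euclNorm_diag_upper {K : ℕ} (d : Fin K → ℝ) (c : ℝ) (hc : 0 ≤ c)
    (h : ∀ i, |d i| ≤ c) (y : Fin K → ℝ) :
    euclNorm ((Matrix.diagonal d) *ᵥ y) ≤ c * euclNorm y := by
  rw [euclNorm_eq, euclNorm_eq, ← Real.sqrt_sq hc, ← Real.sqrt_mul (sq_nonneg c)]
  apply Real.sqrt_le_sqrt
  rw [Finset.mul_sum]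
  apply Finset.sum_le_sum
  intro i _
  rw [Matrix.mulVec_diagonal, mul_pow]
  have h1 : (d i) ^ 2 ≤ c ^ 2 := by
    rw [← sq_abs (d i)]
    exact pow_le_pow_left₀ (abs_nonneg _) (h i) 2
  exact mul_le_mul_of_nonneg_right h1 (sq_nonneg _)

lemma euclNorm_unitary {K : ℕ} (U : Matrix (Fin K) (Fin K) ℝ)
    (hU : Uᴴ * U = 1) (y : Fin K → ℝ) : euclNorm (U *ᵥ y) = euclNorm y := by
  have key : ∀ x : Fin K → ℝ, ∑ i, (x i) ^ 2 = x ⬝ᵥ x := by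
    intro x; simp [dotProduct, sq]
  rw [euclNorm_eq, euclNorm_eq, key, key]
  congr 1
  have hT : Uᵀ * U = 1 := by
    have hstar : Uᴴ = Uᵀ := by
      ext i j
      simp [Matrix.conjTranspose_apply]
    rw [← hstar, hU]
  rw [Matrix.dotProduct_mulVec, ← Matrix.mulVec_transpose, Matrix.mulVec_mulVec, hT,
    Matrix.one_mulVec]

lemma euclNorm_hermitian_lower {K : ℕ} (hK : 0 < K) {M : Matrix (Fin K) (Fin K) ℝ}
    (hM : M.IsHermitian) (y : Fin K → ℝ) :
    (Finset.univ.inf' ⟨⟨0, hK⟩, Finset.mem_univ _⟩ (fun i => |hM.eigenvalues i|)) * euclNorm y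
      ≤ euclNorm (M *ᵥ y) := by
  set a := Finset.univ.inf' ⟨⟨0, hK⟩, Finset.mem_univ _⟩ (fun i => |hM.eigenvalues i|) with ha_def
  have ha : 0 ≤ a := Finset.le_inf' _ _ (fun i _ => abs_nonneg _)
  set U := (Matrix.IsHermitian.eigenvectorUnitary hM : Matrix (Fin K) (Fin K) ℝ) with hU_def
  have hsU : star U * U = 1 := Unitary.coe_star_mul_self (Matrix.IsHermitian.eigenvectorUnitary hM)
  have hUs : U * star U = 1 := Unitary.coe_mul_star_self (Matrix.IsHermitian.eigenvectorUnitary hM)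
  have hU1 : Uᴴ * U = 1 := by rwa [← Matrix.star_eq_conjTranspose]
  have hU2 : (Uᴴ)ᴴ * Uᴴ = 1 := by
    rwa [Matrix.conjTranspose_conjTranspose, ← Matrix.star_eq_conjTranspose]
  have hdiag : Matrix.diagonal (RCLike.ofReal ∘ hM.eigenvalues)
      = Matrix.diagonal hM.eigenvalues := by
    rw [RCLike.ofReal_real_eq_id, Function.id_comp]
  have hspec : M *ᵥ y = U *ᵥ ((Matrix.diagonal hM.eigenvalues) *ᵥ (Uᴴ *ᵥ y)) := by
    conv_lhs => rw [hM.spectral_theorem]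
    rw [Matrix.mulVec_mulVec, Matrix.mulVec_mulVec, hdiag, Unitary.conjStarAlgAut_apply, Matrix.star_eq_conjTranspose, hU_def]
  rw [hspec, euclNorm_unitary U hU1]
  calc a * euclNorm y = a * euclNorm (Uᴴ *ᵥ y) := by rw [euclNorm_unitary Uᴴ hU2]
    _ ≤ euclNorm ((Matrix.diagonal hM.eigenvalues) *ᵥ (Uᴴ *ᵥ y)) :=
        euclNorm_diag_lower _ a ha (fun i => Finset.inf'_le _ (Finset.mem_univ i)) _

/-- The matrix `J` satisfies `2J = Θ (Π ∘ C′) Θ − D`, and consequently every eigenvalue `μ`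
of `J` satisfies `2|μ| ≥ n_min² · minᵢ |λᵢ(Π ∘ C′)| − n_max · maxⱼ |Π_jj C′_jj|`. -/
theorem J_identity_and_eigenvalue_bound
    (N n K : ℕ) (hN : 1 ≤ N) (hn : 2 ≤ n) (hK : 0 < K)
    (z : Fin n → Fin K)
    (nsize : Fin K → ℕ)
    (hnsize : ∀ k, nsize k = (Finset.univ.filter (fun u : Fin n => z u = k)).card)
    (hpos : ∀ k, 0 < nsize k)
    (R : Fin N → Matrix (Fin K) (Fin K) ℝ)
    (hRsym : ∀ m, (R m).IsSymm)
    (C : Matrix (Fin K) (Fin K) ℝ) (hCsym : C.IsSymm)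
    (Pim : Matrix (Fin K) (Fin K) ℝ)
    (hPim : ∀ j k, Pim j k = (1 / (N : ℝ)) * ∑ m, (R m j k) ^ 2)
    (C' : Matrix (Fin K) (Fin K) ℝ)
    (hC' : ∀ j k, C' j k = (if j ≠ k then 2 else 1) * C j k)
    (J : Matrix (Fin K) (Fin K) ℝ)
    (hJ : ∀ j k, J j k = Pim j k * C j k *
      ((Finset.univ.filter (fun p : Fin n × Fin n => p.1 < p.2 ∧
        ((z p.1 = j ∧ z p.2 = k) ∨ (z p.1 = k ∧ z p.2 = j)))).card : ℝ))
    (Θ D : Matrix (Fin K) (Fin K) ℝ)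
    (hΘ : Θ = Matrix.diagonal (fun k => (nsize k : ℝ)))
    (hD : D = Matrix.diagonal (fun j => (nsize j : ℝ) * Pim j j * C' j j)) :
    (2 : ℝ) • J = Θ * (Pim ⊙ C') * Θ - D ∧
    ∀ (hPC : (Pim ⊙ C').IsHermitian) (μ : ℝ), μ ∈ spectrum ℝ J →
      2 * |μ| ≥
        ((Finset.univ.inf' ⟨⟨0, hK⟩, Finset.mem_univ _⟩ nsize : ℕ) : ℝ) ^ 2 *
          Finset.univ.inf' ⟨⟨0, hK⟩, Finset.mem_univ _⟩ (fun i => |hPC.eigenvalues i|)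
        - ((Finset.univ.sup' ⟨⟨0, hK⟩, Finset.mem_univ _⟩ nsize : ℕ) : ℝ) *
          Finset.univ.sup' ⟨⟨0, hK⟩, Finset.mem_univ _⟩ (fun j => |Pim j j * C' j j|) := by
  have part1 : (2 : ℝ) • J = Θ * (Pim ⊙ C') * Θ - D := by
    rw [hΘ, hD]
    ext j k
    rw [Matrix.sub_apply, Matrix.smul_apply, Matrix.mul_diagonal, Matrix.diagonal_mul,
      Matrix.hadamard_apply, Matrix.diagonal_apply, hJ, hC', smul_eq_mul]
    by_cases hjk : j = k
    · subst hjk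
      rw [if_pos rfl, if_neg (by simp)]
      have hcount := count_diag z j
      rw [← hnsize j] at hcount
      have hcast : 2 * ((Finset.univ.filter (fun p : Fin n × Fin n => p.1 < p.2 ∧
          ((z p.1 = j ∧ z p.2 = j) ∨ (z p.1 = j ∧ z p.2 = j)))).card : ℝ)
          = (nsize j : ℝ) * (nsize j : ℝ) - (nsize j : ℝ) := by
        have := congrArg (fun m : ℕ => (m : ℝ)) hcount
        push_cast at this
        linarith
      rw [hC', if_neg (by simp)]
      linear_combination (Pim j j * C j j) * hcast
    · rw [if_neg hjk, if_pos hjk]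
      have hcount := count_offdiag z j k hjk
      rw [← hnsize j, ← hnsize k] at hcount
      rw [hcount]
      push_cast
      ring
  refine ⟨part1, ?_⟩
  intro hPC μ hμ
  rw [spectrum.mem_iff] at hμ
  have hdet : ((μ • (1 : Matrix (Fin K) (Fin K) ℝ)) - J).det = 0 := by
    rw [Algebra.algebraMap_eq_smul_one] at hμ
    by_contra h
    exact hμ ((Matrix.isUnit_iff_isUnit_det _).mpr (isUnit_iff_ne_zero.mpr h))
  obtain ⟨v, hv0, hv⟩ := Matrix.exists_mulVec_eq_zero_iff.mpr hdet
  have hJv : J *ᵥ v = μ • v := by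
    rw [Matrix.sub_mulVec, Matrix.smul_mulVec, Matrix.one_mulVec, sub_eq_zero] at hv
    exact hv.symm
  set M := Pim ⊙ C' with hM
  set nmN : ℕ := Finset.univ.inf' ⟨⟨0, hK⟩, Finset.mem_univ _⟩ nsize with hnmN
  set nxN : ℕ := Finset.univ.sup' ⟨⟨0, hK⟩, Finset.mem_univ _⟩ nsize with hnxN
  set a : ℝ := Finset.univ.inf' ⟨⟨0, hK⟩, Finset.mem_univ _⟩
    (fun i => |hPC.eigenvalues i|) with hadef
  set dmx : ℝ := Finset.univ.sup' ⟨⟨0, hK⟩, Finset.mem_univ _⟩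
    (fun j => |Pim j j * C' j j|) with hdmxdef
  have ha0 : 0 ≤ a := by
    rw [hadef]
    exact Finset.le_inf' _ _ fun i _ => abs_nonneg _
  have hdmx0 : 0 ≤ dmx := by
    rw [hdmxdef]
    exact le_trans (abs_nonneg (Pim ⟨0, hK⟩ ⟨0, hK⟩ * C' ⟨0, hK⟩ ⟨0, hK⟩))
      (Finset.le_sup' (fun j => |Pim j j * C' j j|) (Finset.mem_univ (⟨0, hK⟩ : Fin K)))
  have hnm0 : (0 : ℝ) ≤ (nmN : ℝ) := Nat.cast_nonneg _
  have hnx0 : (0 : ℝ) ≤ (nxN : ℝ) := Nat.cast_nonneg _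
  have hΘlow : ∀ k, (nmN : ℝ) ≤ |((nsize k : ℝ))| := by
    intro k
    rw [abs_of_nonneg (Nat.cast_nonneg _), hnmN]
    exact_mod_cast Finset.inf'_le nsize (Finset.mem_univ k)
  have hDup : ∀ k, |(nsize k : ℝ) * Pim k k * C' k k| ≤ (nxN : ℝ) * dmx := by
    intro k
    rw [mul_assoc, abs_mul, abs_of_nonneg (Nat.cast_nonneg _), hnxN, hdmxdef]
    exact mul_le_mul (by exact_mod_cast Finset.le_sup' nsize (Finset.mem_univ k))
      (Finset.le_sup' (fun j => |Pim j j * C' j j|) (Finset.mem_univ k)) (abs_nonneg _)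
      (by exact_mod_cast Nat.cast_nonneg _)
  have hid : Θ * M * Θ = (2 : ℝ) • J + D := by rw [part1, sub_add_cancel]
  have hvec : (Θ * M * Θ) *ᵥ v = (2 * μ) • v + D *ᵥ v := by
    rw [hid, Matrix.add_mulVec, Matrix.smul_mulVec, hJv, smul_smul]
  have e3 : 0 < euclNorm v := euclNorm_pos hv0
  have e1 : euclNorm ((Θ * M * Θ) *ᵥ v) ≤ 2 * |μ| * euclNorm v + (nxN : ℝ) * dmx * euclNorm v := by
    rw [hvec]
    refine le_trans (euclNorm_add_le _ _) (add_le_add ?_ ?_)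
    · rw [euclNorm_smul, abs_mul, abs_two]
    · rw [hD]
      exact euclNorm_diag_upper _ _ (mul_nonneg hnx0 hdmx0) hDup v
  have e2 : (nmN : ℝ) * (a * ((nmN : ℝ) * euclNorm v)) ≤ euclNorm ((Θ * M * Θ) *ᵥ v) := by
    rw [← Matrix.mulVec_mulVec, ← Matrix.mulVec_mulVec]
    have s1 : (nmN : ℝ) * euclNorm v ≤ euclNorm (Θ *ᵥ v) := by
      rw [hΘ]; exact euclNorm_diag_lower _ _ hnm0 hΘlow v
    have s2 : a * ((nmN : ℝ) * euclNorm v) ≤ euclNorm (M *ᵥ (Θ *ᵥ v)) := by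
      refine le_trans ?_ (euclNorm_hermitian_lower hK hPC (Θ *ᵥ v))
      exact mul_le_mul_of_nonneg_left s1 ha0
    have s3 : (nmN : ℝ) * euclNorm (M *ᵥ (Θ *ᵥ v)) ≤ euclNorm (Θ *ᵥ (M *ᵥ (Θ *ᵥ v))) := by
      rw [hΘ]; exact euclNorm_diag_lower _ _ hnm0 hΘlow _
    exact le_trans (mul_le_mul_of_nonneg_left s2 hnm0) s3
  have key := le_trans e2 e1
  have hring : (nmN : ℝ) * (a * ((nmN : ℝ) * euclNorm v)) = ((nmN : ℝ) ^ 2 * a) * euclNorm v := by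
    ring
  rw [hring] at key
  rw [ge_iff_le]
  have key2 : ((nmN : ℝ) ^ 2 * a - (nxN : ℝ) * dmx) * euclNorm v ≤ (2 * |μ|) * euclNorm v := by
    nlinarith [key]
  have := (mul_le_mul_iff_of_pos_right e3).mp key2
  linarith
end

section
/- (Nonasymptotic form of Proposition 2.) Suppose n_min ≥ 2, let γ := min_{1≤i≤K}|λ_i(Π ∘ C′)| > 0, and suppose there exists δ ∈ (0,1] such that |H_{jk}| ≤ (1−δ)(n_min²/K) γ for all 1 ≤ j,k ≤ K, where H_{jk} = ∑_{(s,t)∈P, {z_s,z_t}≠{j,k}} ((1/N)∑_{m=1}^N R^{(m)}_{jk} R^{(m)}_{z_s z_t}) C_{z_s z_t}. Then the smallest absolute eigenvalue of F satisfies min_{1≤i≤K}|λ_i(F)| ≥ (2δ−1) n_min² γ − n_max · max_{1≤j≤K}|Π_{jj} C′_{jj}| − 2‖Ψ ∘ C‖, where ‖·‖ is the spectral (operator) norm. -/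
open Matrix BigOperators
open scoped Matrix.Norms.L2Operator


private lemma norm_sq_eu {K : ℕ} (w : Fin K → ℝ) :
    ‖(EuclideanSpace.equiv (Fin K) ℝ).symm w‖ ^ 2 = ∑ i, w i ^ 2 := by
  rw [EuclideanSpace.norm_eq, Real.sq_sqrt (by positivity)]
  simp [Real.norm_eq_abs, sq_abs]

private lemma norm_le_of_sq_le_sq {a b : ℝ} (hb : 0 ≤ b) (h : a ^ 2 ≤ b ^ 2) (ha : 0 ≤ a) : a ≤ b := by
  nlinarith

/-- entrywise bound gives `‖M x‖ ≤ K c ‖x‖` -/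
private lemma entry_upper {K : ℕ} (M : Matrix (Fin K) (Fin K) ℝ) (c : ℝ) (hc : 0 ≤ c)
    (h : ∀ j k, |M j k| ≤ c) (x : EuclideanSpace ℝ (Fin K)) :
    ‖(EuclideanSpace.equiv (Fin K) ℝ).symm (M *ᵥ (WithLp.equiv 2 _ x))‖ ≤ (K : ℝ) * c * ‖x‖ := by
  apply norm_le_of_sq_le_sq (by positivity) _ (norm_nonneg _)
  rw [norm_sq_eu]
  have hxn : ‖x‖ ^ 2 = ∑ i, (x i) ^ 2 := by
    rw [show x = (EuclideanSpace.equiv (Fin K) ℝ).symm (WithLp.equiv 2 _ x) from rfl, norm_sq_eu]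
    rfl
  have key : ∀ j, (M *ᵥ (WithLp.equiv 2 _ x)) j ^ 2 ≤ ((K : ℝ) * c ^ 2) * ∑ i, (x i) ^ 2 := by
    intro j
    have := Finset.sum_mul_sq_le_sq_mul_sq Finset.univ (fun k => M j k) (fun k => x k)
    have h2 : ∑ k, M j k ^ 2 ≤ (K : ℝ) * c ^ 2 := by
      calc ∑ k, M j k ^ 2 ≤ ∑ _k : Fin K, c ^ 2 := by
            apply Finset.sum_le_sum; intro k _
            have := h j k; nlinarith [abs_nonneg (M j k), sq_abs (M j k)]
        _ = (K : ℝ) * c ^ 2 := by simp [mul_comm]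
    have hmv : (M *ᵥ (WithLp.equiv 2 _ x)) j = ∑ k, M j k * x k := rfl
    rw [hmv]
    calc (∑ k, M j k * x k) ^ 2 ≤ (∑ k, M j k ^ 2) * ∑ k, (x k) ^ 2 := this
      _ ≤ ((K:ℝ) * c ^ 2) * ∑ i, (x i) ^ 2 := by
          apply mul_le_mul_of_nonneg_right h2 (by positivity)
  calc ∑ j, (M *ᵥ (WithLp.equiv 2 _ x)) j ^ 2 ≤ ∑ _j : Fin K, ((K : ℝ) * c ^ 2) * ∑ i, (x i) ^ 2 :=
        Finset.sum_le_sum (fun j _ => key j)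
    _ = (K : ℝ) * ((K : ℝ) * c ^ 2) * ∑ i, (x i) ^ 2 := by
        rw [Finset.sum_const]; simp [mul_assoc]
    _ = ((K : ℝ) * c * ‖x‖) ^ 2 := by rw [show ∑ i, (x i) ^ 2 = ‖x‖ ^ 2 from hxn.symm]; ring

/-- diagonal upper bound -/
private lemma diag_upper {K : ℕ} (d : Fin K → ℝ) (c : ℝ) (hc : 0 ≤ c)
    (h : ∀ j, |d j| ≤ c) (x : EuclideanSpace ℝ (Fin K)) :
    ‖(EuclideanSpace.equiv (Fin K) ℝ).symm ((Matrix.diagonal d) *ᵥ (WithLp.equiv 2 _ x))‖ ≤ c * ‖x‖ := by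
  apply norm_le_of_sq_le_sq (by positivity) _ (norm_nonneg _)
  rw [norm_sq_eu]
  have hxn : ‖x‖ ^ 2 = ∑ i, (x i) ^ 2 := by
    rw [show x = (EuclideanSpace.equiv (Fin K) ℝ).symm (WithLp.equiv 2 _ x) from rfl, norm_sq_eu]
    rfl
  rw [mul_pow, hxn, Finset.mul_sum]
  apply Finset.sum_le_sum
  intro j _
  rw [Matrix.mulVec_diagonal]
  have := h j
  have hxj : ((WithLp.equiv 2 _ x) j : ℝ) = x j := rfl
  rw [mul_pow, hxj]
  have : d j ^ 2 ≤ c ^ 2 := by nlinarith [abs_nonneg (d j), sq_abs (d j)]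
  nlinarith [sq_nonneg (x j)]

/-- diagonal lower bound -/
private lemma diag_lower {K : ℕ} (d : Fin K → ℝ) (c : ℝ) (hc : 0 ≤ c)
    (h : ∀ j, c ≤ |d j|) (x : EuclideanSpace ℝ (Fin K)) :
    c * ‖x‖ ≤ ‖(EuclideanSpace.equiv (Fin K) ℝ).symm ((Matrix.diagonal d) *ᵥ (WithLp.equiv 2 _ x))‖ := by
  apply norm_le_of_sq_le_sq (norm_nonneg _) _ (by positivity)
  rw [norm_sq_eu]
  have hxn : ‖x‖ ^ 2 = ∑ i, (x i) ^ 2 := by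
    rw [show x = (EuclideanSpace.equiv (Fin K) ℝ).symm (WithLp.equiv 2 _ x) from rfl, norm_sq_eu]
    rfl
  rw [mul_pow, hxn, Finset.mul_sum]
  apply Finset.sum_le_sum
  intro j _
  rw [Matrix.mulVec_diagonal]
  have := h j
  have hxj : ((WithLp.equiv 2 _ x) j : ℝ) = x j := rfl
  rw [mul_pow, hxj]
  have : c ^ 2 ≤ d j ^ 2 := by nlinarith [abs_nonneg (d j), sq_abs (d j)]
  nlinarith [sq_nonneg (x j)]
private lemma herm_lower {K : ℕ} (B : Matrix (Fin K) (Fin K) ℝ) (hB : B.IsHermitian)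
    (c : ℝ) (hc : 0 ≤ c) (hce : ∀ i, c ≤ |hB.eigenvalues i|) (x : EuclideanSpace ℝ (Fin K)) :
    c * ‖x‖ ≤ ‖(EuclideanSpace.equiv (Fin K) ℝ).symm (B *ᵥ (WithLp.equiv 2 _ x))‖ := by
  have hBT : Bᵀ = B := by
    have := hB; rw [Matrix.IsHermitian, Matrix.conjTranspose_eq_transpose_of_trivial] at this; exact this
  set b := hB.eigenvectorBasis with hb
  set y : EuclideanSpace ℝ (Fin K) := (EuclideanSpace.equiv (Fin K) ℝ).symm (B *ᵥ (WithLp.equiv 2 _ x)) with hy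
  have hrepr : ∀ i, b.repr y i = hB.eigenvalues i * b.repr x i := by
    intro i
    rw [OrthonormalBasis.repr_apply_apply, OrthonormalBasis.repr_apply_apply]
    rw [EuclideanSpace.inner_eq_star_dotProduct, EuclideanSpace.inner_eq_star_dotProduct]
    simp only [star_trivial]
    have : y.ofLp = B *ᵥ x.ofLp := rfl
    rw [this, dotProduct_comm, dotProduct_mulVec, ← mulVec_transpose, hBT, hB.mulVec_eigenvectorBasis]
    simp [smul_dotProduct, smul_eq_mul, dotProduct_comm, hb]
  have hnx : ‖x‖ ^ 2 = ∑ i, (b.repr x i) ^ 2 := by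
    rw [← b.repr.norm_map x, ← norm_sq_eu]
    rfl
  have hny : ‖y‖ ^ 2 = ∑ i, (b.repr y i) ^ 2 := by
    rw [← b.repr.norm_map y, ← norm_sq_eu]
    rfl
  have hsq : (c * ‖x‖) ^ 2 ≤ ‖y‖ ^ 2 := by
    rw [mul_pow, hnx, hny, Finset.mul_sum]
    apply Finset.sum_le_sum
    intro i _
    rw [hrepr i, mul_pow]
    have h1 : c ^ 2 ≤ hB.eigenvalues i ^ 2 := by
      have := hce i
      nlinarith [abs_nonneg (hB.eigenvalues i), sq_abs (hB.eigenvalues i)]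
    nlinarith [sq_nonneg (b.repr x i)]
  calc c * ‖x‖ = Real.sqrt ((c * ‖x‖) ^ 2) := (Real.sqrt_sq (by positivity)).symm
    _ ≤ Real.sqrt (‖y‖ ^ 2) := Real.sqrt_le_sqrt hsq
    _ = ‖y‖ := Real.sqrt_sq (norm_nonneg _)

private lemma card_swap_lt {n' : ℕ} (A B : Finset (Fin n')) :
    ((A ×ˢ B).filter fun p => p.2 < p.1).card = ((B ×ˢ A).filter fun p => p.1 < p.2).card := by
  rw [show ((A ×ˢ B).filter fun p => p.2 < p.1)
      = ((B ×ˢ A).filter fun p => p.1 < p.2).image Prod.swap from ?_]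
  · exact Finset.card_image_of_injective _ Prod.swap_injective
  · ext p
    simp only [Finset.mem_image, Finset.mem_filter, Finset.mem_product]
    constructor
    · rintro ⟨⟨h1, h2⟩, h3⟩
      exact ⟨p.swap, ⟨⟨h2, h1⟩, h3⟩, Prod.swap_swap p⟩
    · rintro ⟨q, ⟨⟨h1, h2⟩, h3⟩, rfl⟩
      exact ⟨⟨h2, h1⟩, h3⟩

private lemma card_partition {n' : ℕ} (A B : Finset (Fin n')) :
    ((A ×ˢ B).filter fun p => p.1 < p.2).card + ((A ×ˢ B).filter fun p => p.1 = p.2).card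
      + ((A ×ˢ B).filter fun p => p.2 < p.1).card = A.card * B.card := by
  classical
  rw [← Finset.card_product]
  have h1 := Finset.card_filter_add_card_filter_not
    (s := A ×ˢ B) (p := fun p : Fin n' × Fin n' => p.1 < p.2)
  have h2 := Finset.card_filter_add_card_filter_not
    (s := (A ×ˢ B).filter fun p : Fin n' × Fin n' => ¬ p.1 < p.2)
    (p := fun p : Fin n' × Fin n' => p.1 = p.2)
  rw [Finset.filter_filter, Finset.filter_filter] at h2
  have e1 : ((A ×ˢ B).filter fun p => ¬ p.1 < p.2 ∧ p.1 = p.2)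
      = ((A ×ˢ B).filter fun p => p.1 = p.2) := by
    apply Finset.filter_congr; intro p _
    simp only [Fin.lt_def, Fin.ext_iff, decide_eq_true_eq]
    omega
  have e2 : ((A ×ˢ B).filter fun p => ¬ p.1 < p.2 ∧ ¬ p.1 = p.2)
      = ((A ×ˢ B).filter fun p => p.2 < p.1) := by
    apply Finset.filter_congr; intro p _
    simp only [Fin.lt_def, Fin.ext_iff, decide_eq_true_eq]
    omega
  rw [e1, e2] at h2
  omega

private lemma card_eq_diag {n' : ℕ} (A : Finset (Fin n')) :
    ((A ×ˢ A).filter fun p => p.1 = p.2).card = A.card := by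
  rw [show ((A ×ˢ A).filter fun p => p.1 = p.2) = A.image (fun a => (a, a)) from ?_]
  · exact Finset.card_image_of_injective _ (fun a b h => (Prod.ext_iff.1 h).1)
  · ext p
    simp only [Finset.mem_image, Finset.mem_filter, Finset.mem_product]
    constructor
    · rintro ⟨⟨h1, h2⟩, h3⟩
      exact ⟨p.1, h1, by rw [Prod.ext_iff]; exact ⟨rfl, h3⟩⟩
    · rintro ⟨a, ha, rfl⟩
      exact ⟨⟨ha, ha⟩, rfl⟩

private lemma L_eq {n' : ℕ} (A : Finset (Fin n')) :
    2 * ((A ×ˢ A).filter fun p => p.1 < p.2).card + A.card = A.card * A.card := by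
  have h := card_partition A A
  have h2 := card_swap_lt A A
  have h3 := card_eq_diag A
  omega

private lemma L_ne {n' : ℕ} (A B : Finset (Fin n')) (hAB : Disjoint A B) :
    (((A ×ˢ B).filter fun p => p.1 < p.2) ∪ ((B ×ˢ A).filter fun p => p.1 < p.2)).card
      = A.card * B.card := by
  classical
  have hdisj : Disjoint ((A ×ˢ B).filter fun p => p.1 < p.2)
      ((B ×ˢ A).filter fun p => p.1 < p.2) := by
    rw [Finset.disjoint_left]
    intro p hp hq
    simp only [Finset.mem_filter, Finset.mem_product] at hp hq
    exact (Finset.disjoint_left.1 hAB) hp.1.1 hq.1.1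
  rw [Finset.card_union_of_disjoint hdisj, ← card_swap_lt A B]
  have h := card_partition A B
  have h0 : ((A ×ˢ B).filter fun p => p.1 = p.2).card = 0 := by
    rw [Finset.card_eq_zero]
    ext p
    simp only [Finset.mem_filter, Finset.mem_product, Finset.notMem_empty, iff_false, not_and]
    rintro ⟨h1, h2⟩ heq
    rw [heq] at h1
    exact Finset.disjoint_left.1 hAB h1 h2
  omega
set_option maxHeartbeats 1600000 in
/-- **Nonasymptotic form of Proposition 2.** If the cross-cell covariance terms `H_{jk}` are
bounded by `(1−δ)(n_min²/K)γ` with `γ = minᵢ|λᵢ(Π ∘ C′)| > 0`, then the smallest absolute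
eigenvalue of `F` is at least
`(2δ−1) n_min² γ − n_max · maxⱼ|Π_jj C′_jj| − 2‖Ψ ∘ C‖`. -/
theorem smallest_eigenvalue_F_lower_bound
    (N n K : ℕ) (hN : 1 ≤ N) (hn : 2 ≤ n) (hK : 0 < K)
    (z : Fin n → Fin K)
    (nsize : Fin K → ℕ)
    (hnsize : ∀ k, nsize k = (Finset.univ.filter (fun u : Fin n => z u = k)).card)
    (nmin nmax : ℕ)
    (hnmin : nmin = Finset.univ.inf' ⟨⟨0, hK⟩, Finset.mem_univ _⟩ nsize)
    (hnmax : nmax = Finset.univ.sup' ⟨⟨0, hK⟩, Finset.mem_univ _⟩ nsize)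
    (hnmin2 : 2 ≤ nmin)
    (R Ψ : Fin N → Matrix (Fin K) (Fin K) ℝ)
    (hRsym : ∀ m, (R m).IsSymm) (hΨsym : ∀ m, (Ψ m).IsSymm)
    (C : Matrix (Fin K) (Fin K) ℝ) (hCsym : C.IsSymm)
    (Pim Psibar : Matrix (Fin K) (Fin K) ℝ)
    (hPim : ∀ j k, Pim j k = (1 / (N : ℝ)) * ∑ m, (R m j k) ^ 2)
    (hPsibar : ∀ j k, Psibar j k = (1 / (N : ℝ)) * ∑ m, Ψ m j k)
    (C' : Matrix (Fin K) (Fin K) ℝ)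
    (hC' : ∀ j k, C' j k = (if j ≠ k then 2 else 1) * C j k)
    (F : Matrix (Fin K) (Fin K) ℝ)
    (hF : ∀ j k, F j k = 2 * Psibar j k * C j k
      + 2 * ∑ p ∈ Finset.univ.filter (fun p : Fin n × Fin n => p.1 < p.2),
          ((1 / (N : ℝ)) * ∑ m, R m j k * R m (z p.1) (z p.2)) * C (z p.1) (z p.2))
    (H : Matrix (Fin K) (Fin K) ℝ)
    (hH : ∀ j k, H j k = ∑ p ∈ Finset.univ.filter (fun p : Fin n × Fin n => p.1 < p.2 ∧
        ¬((z p.1 = j ∧ z p.2 = k) ∨ (z p.1 = k ∧ z p.2 = j))),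
          ((1 / (N : ℝ)) * ∑ m, R m j k * R m (z p.1) (z p.2)) * C (z p.1) (z p.2))
    (hPC : (Pim ⊙ C').IsHermitian)
    (γ : ℝ)
    (hγ : γ = Finset.univ.inf' ⟨⟨0, hK⟩, Finset.mem_univ _⟩ (fun i => |hPC.eigenvalues i|))
    (hγpos : 0 < γ)
    (δ : ℝ) (hδ0 : 0 < δ) (hδ1 : δ ≤ 1)
    (hHbound : ∀ j k, |H j k| ≤ (1 - δ) * ((nmin : ℝ) ^ 2 / (K : ℝ)) * γ) :
    ∀ (hF' : F.IsHermitian),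
      Finset.univ.inf' ⟨⟨0, hK⟩, Finset.mem_univ _⟩ (fun i => |hF'.eigenvalues i|) ≥
        (2 * δ - 1) * (nmin : ℝ) ^ 2 * γ
        - (nmax : ℝ) *
            Finset.univ.sup' ⟨⟨0, hK⟩, Finset.mem_univ _⟩ (fun j => |Pim j j * C' j j|)
        - 2 * ‖Psibar ⊙ C‖ := by
  intro hF'
  classical
  have symm_apply : ∀ (A : Matrix (Fin K) (Fin K) ℝ), A.IsSymm → ∀ a b, A a b = A b a := by
    intro A hA a b
    calc A a b = Aᵀ b a := (Matrix.transpose_apply A b a).symm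
      _ = A b a := by rw [hA]
  set B : Matrix (Fin K) (Fin K) ℝ := Pim ⊙ C' with hBdef
  set D : Matrix (Fin K) (Fin K) ℝ := Matrix.diagonal (fun j => (nsize j : ℝ)) with hDdef
  set E : Matrix (Fin K) (Fin K) ℝ :=
    Matrix.diagonal (fun j => (nsize j : ℝ) * (Pim j j * C' j j)) with hEdef
  -- the structural decomposition of F
  have hFdecomp : F = D * B * D + ((2:ℝ) • (Psibar ⊙ C) - E + (2:ℝ) • H) := by
    ext j k
    have hDBD : (D * B * D) j k = (nsize j : ℝ) * (Pim j k * C' j k) * (nsize k : ℝ) := by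
      rw [Matrix.mul_diagonal, Matrix.diagonal_mul, hBdef, Matrix.hadamard_apply]
    set f : Fin n × Fin n → ℝ := fun p =>
      ((1 / (N : ℝ)) * ∑ m, R m j k * R m (z p.1) (z p.2)) * C (z p.1) (z p.2) with hfdef
    set S : Finset (Fin n × Fin n) := Finset.univ.filter (fun p : Fin n × Fin n =>
      p.1 < p.2 ∧ ((z p.1 = j ∧ z p.2 = k) ∨ (z p.1 = k ∧ z p.2 = j))) with hSdef
    have hconst : ∀ p ∈ S, f p = Pim j k * C j k := by
      intro p hp
      rw [hSdef, Finset.mem_filter] at hp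
      obtain ⟨-, -, hc⟩ := hp
      rcases hc with ⟨h1, h2⟩ | ⟨h1, h2⟩
      · rw [hfdef]
        simp only [h1, h2, hPim j k, pow_two]
      · rw [hfdef]
        have hC2 : C (z p.1) (z p.2) = C j k := by
          rw [h1, h2, symm_apply C hCsym k j]
        have hR2 : ∀ m : Fin N, R m (z p.1) (z p.2) = R m j k := by
          intro m; rw [h1, h2, symm_apply (R m) (hRsym m) k j]
        simp only [hC2, hR2, hPim j k, pow_two]
    have hsplit : ∑ p ∈ Finset.univ.filter (fun p : Fin n × Fin n => p.1 < p.2), f p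
        = (S.card : ℝ) * (Pim j k * C j k) + H j k := by
      rw [← Finset.sum_filter_add_sum_filter_not
        (Finset.univ.filter (fun p : Fin n × Fin n => p.1 < p.2))
        (fun p => (z p.1 = j ∧ z p.2 = k) ∨ (z p.1 = k ∧ z p.2 = j)) f]
      congr 1
      · rw [Finset.filter_filter]
        rw [show (Finset.univ.filter fun p : Fin n × Fin n =>
            p.1 < p.2 ∧ ((z p.1 = j ∧ z p.2 = k) ∨ (z p.1 = k ∧ z p.2 = j))) = S from rfl] at *
        rw [Finset.sum_congr rfl hconst, Finset.sum_const, nsmul_eq_mul]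
      · rw [hH j k, Finset.filter_filter]
    -- the counting identity
    have hcount : 2 * (S.card : ℝ) * (Pim j k * C j k)
        = (nsize j : ℝ) * (Pim j k * C' j k) * (nsize k : ℝ)
          - (if j = k then (nsize j : ℝ) * (Pim j j * C' j j) else 0) := by
      by_cases hjk : j = k
      · subst hjk
        have hSeq : S = ((Finset.univ.filter (fun u : Fin n => z u = j)) ×ˢ
            (Finset.univ.filter (fun u : Fin n => z u = j))).filter (fun p => p.1 < p.2) := by
          ext p
          simp only [hSdef, Finset.mem_filter, Finset.mem_product, Finset.mem_univ, true_and]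
          tauto
        have hL := L_eq (Finset.univ.filter (fun u : Fin n => z u = j))
        have hcard : 2 * S.card + nsize j = nsize j * nsize j := by
          rw [hSeq, hnsize]; exact hL
        have hcardR : 2 * (S.card : ℝ) = (nsize j : ℝ) * (nsize j : ℝ) - (nsize j : ℝ) := by
          have := congrArg (Nat.cast (R := ℝ)) hcard
          push_cast at this
          linarith
        have hC'jj : C' j j = C j j := by rw [hC']; simp
        simp only [eq_self_iff_true, if_true, hC'jj]
        linear_combination (Pim j j * C j j) * hcardR
      · have hdisj : Disjoint (Finset.univ.filter (fun u : Fin n => z u = j))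
            (Finset.univ.filter (fun u : Fin n => z u = k)) := by
          rw [Finset.disjoint_left]
          intro a ha hb
          simp only [Finset.mem_filter, Finset.mem_univ, true_and] at ha hb
          exact hjk (ha ▸ hb ▸ rfl)
        have hSeq : S = (((Finset.univ.filter (fun u : Fin n => z u = j)) ×ˢ
              (Finset.univ.filter (fun u : Fin n => z u = k))).filter (fun p => p.1 < p.2))
            ∪ (((Finset.univ.filter (fun u : Fin n => z u = k)) ×ˢ
              (Finset.univ.filter (fun u : Fin n => z u = j))).filter (fun p => p.1 < p.2)) := by
          ext p
          simp only [hSdef, Finset.mem_filter, Finset.mem_union, Finset.mem_product,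
            Finset.mem_univ, true_and]
          tauto
        have hcard : S.card = nsize j * nsize k := by
          rw [hSeq, hnsize j, hnsize k]
          exact L_ne _ _ hdisj
        have hC'jk : C' j k = 2 * C j k := by rw [hC', if_pos hjk]
        rw [if_neg hjk, hcard, hC'jk]
        push_cast
        ring
    -- put the entry identity together
    rw [hF j k, hsplit]
    simp only [Matrix.add_apply, Matrix.sub_apply, Matrix.smul_apply, hDBD,
      Matrix.hadamard_apply, smul_eq_mul, hEdef, Matrix.diagonal_apply]
    by_cases hjk : j = k
    · rw [if_pos hjk] at hcount ⊢
      nlinarith [hcount]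
    · rw [if_neg hjk] at hcount ⊢
      nlinarith [hcount]
  -- now the spectral estimate
  rw [ge_iff_le]
  apply Finset.le_inf'
  intro i _
  set v : EuclideanSpace ℝ (Fin K) := hF'.eigenvectorBasis i with hvdef
  have hvnorm : ‖v‖ = 1 := hF'.eigenvectorBasis.orthonormal.1 i
  set lam : ℝ := hF'.eigenvalues i with hlamdef
  set w : Fin K → ℝ := (WithLp.equiv 2 _) v with hwdef
  have hcoe : ∀ u : Fin K → ℝ,
      (WithLp.equiv 2 ((i : Fin K) → ℝ)) ((EuclideanSpace.equiv (Fin K) ℝ).symm u) = u :=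
    fun _ => rfl
  have hFv : F *ᵥ w = lam • w := hF'.mulVec_eigenvectorBasis i
  have h1 : ‖(EuclideanSpace.equiv (Fin K) ℝ).symm (F *ᵥ w)‖ = |lam| := by
    rw [hFv, _root_.map_smul]
    have he : (EuclideanSpace.equiv (Fin K) ℝ).symm w = v := rfl
    rw [he, norm_smul, hvnorm, Real.norm_eq_abs, mul_one]
  -- lower bound for main term
  have hnmin0 : (0:ℝ) ≤ (nmin : ℝ) := Nat.cast_nonneg _
  have hmain : (nmin : ℝ) * ((nmin : ℝ) * γ) ≤
      ‖(EuclideanSpace.equiv (Fin K) ℝ).symm ((D * B * D) *ᵥ w)‖ := by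
    have hd : ∀ j2 : Fin K, (nmin : ℝ) ≤ |((fun j => (nsize j : ℝ)) j2)| := by
      intro j2
      rw [abs_of_nonneg (Nat.cast_nonneg _)]
      show (nmin : ℝ) ≤ (nsize j2 : ℝ)
      exact_mod_cast hnmin ▸ Finset.inf'_le _ (Finset.mem_univ j2)
    have s1 : (nmin : ℝ) * ‖v‖ ≤
        ‖(EuclideanSpace.equiv (Fin K) ℝ).symm (D *ᵥ w)‖ :=
      diag_lower _ _ hnmin0 hd v
    have hce : ∀ i2, γ ≤ |hPC.eigenvalues i2| := fun i2 =>
      hγ ▸ Finset.inf'_le _ (Finset.mem_univ i2)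
    have s2 : γ * ‖(EuclideanSpace.equiv (Fin K) ℝ).symm (D *ᵥ w)‖ ≤
        ‖(EuclideanSpace.equiv (Fin K) ℝ).symm (B *ᵥ (D *ᵥ w))‖ := by
      have := herm_lower B hPC γ hγpos.le hce ((EuclideanSpace.equiv (Fin K) ℝ).symm (D *ᵥ w))
      rwa [hcoe] at this
    have s3 : (nmin : ℝ) * ‖(EuclideanSpace.equiv (Fin K) ℝ).symm (B *ᵥ (D *ᵥ w))‖ ≤
        ‖(EuclideanSpace.equiv (Fin K) ℝ).symm (D *ᵥ (B *ᵥ (D *ᵥ w)))‖ := by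
      have := diag_lower _ _ hnmin0 hd ((EuclideanSpace.equiv (Fin K) ℝ).symm (B *ᵥ (D *ᵥ w)))
      rwa [hcoe] at this
    have hvec : D *ᵥ (B *ᵥ (D *ᵥ w)) = (D * B * D) *ᵥ w := by
      rw [Matrix.mulVec_mulVec, Matrix.mulVec_mulVec]
    rw [← hvec]
    rw [hvnorm, mul_one] at s1
    calc (nmin : ℝ) * ((nmin : ℝ) * γ)
        ≤ (nmin : ℝ) * (γ * ‖(EuclideanSpace.equiv (Fin K) ℝ).symm (D *ᵥ w)‖) := by
          apply mul_le_mul_of_nonneg_left _ hnmin0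
          rw [mul_comm (nmin : ℝ) γ] at *
          exact mul_le_mul_of_nonneg_left s1 hγpos.le
      _ ≤ (nmin : ℝ) * ‖(EuclideanSpace.equiv (Fin K) ℝ).symm (B *ᵥ (D *ᵥ w))‖ :=
          mul_le_mul_of_nonneg_left s2 hnmin0
      _ ≤ ‖(EuclideanSpace.equiv (Fin K) ℝ).symm (D *ᵥ (B *ᵥ (D *ᵥ w)))‖ := s3
  -- upper bound pieces
  set supJ : ℝ := Finset.univ.sup' ⟨⟨0, hK⟩, Finset.mem_univ _⟩
      (fun j => |Pim j j * C' j j|) with hsupJ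
  have hsupJ0 : 0 ≤ supJ := by
    rw [hsupJ]
    exact le_trans (abs_nonneg (Pim ⟨0, hK⟩ ⟨0, hK⟩ * C' ⟨0, hK⟩ ⟨0, hK⟩))
      (Finset.le_sup' (fun j => |Pim j j * C' j j|) (Finset.mem_univ (⟨0, hK⟩ : Fin K)))
  have hnmax0 : (0:ℝ) ≤ (nmax : ℝ) := Nat.cast_nonneg _
  have hEbound : ‖(EuclideanSpace.equiv (Fin K) ℝ).symm (E *ᵥ w)‖ ≤ (nmax : ℝ) * supJ := by
    have hd : ∀ j2, |((fun j => (nsize j : ℝ) * (Pim j j * C' j j)) j2)| ≤ (nmax : ℝ) * supJ := by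
      intro j2
      rw [abs_mul, abs_of_nonneg (Nat.cast_nonneg (nsize j2))]
      apply mul_le_mul
      · exact_mod_cast hnmax ▸ Finset.le_sup' _ (Finset.mem_univ j2)
      · rw [hsupJ]
        exact Finset.le_sup' (fun j => |Pim j j * C' j j|) (Finset.mem_univ j2)
      · exact abs_nonneg _
      · exact hnmax0
    have := diag_upper _ _ (mul_nonneg hnmax0 hsupJ0) hd v
    rwa [hvnorm, mul_one] at this
  set cH : ℝ := (1 - δ) * ((nmin : ℝ) ^ 2 / (K : ℝ)) * γ with hcH
  have hcH0 : 0 ≤ cH := by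
    apply mul_nonneg (mul_nonneg (by linarith) _) hγpos.le
    positivity
  have hHb : ‖(EuclideanSpace.equiv (Fin K) ℝ).symm (H *ᵥ w)‖ ≤ (K : ℝ) * cH := by
    have := entry_upper H cH hcH0 (fun j k => hHbound j k) v
    rwa [hvnorm, mul_one] at this
  have hPsib : ‖(EuclideanSpace.equiv (Fin K) ℝ).symm ((Psibar ⊙ C) *ᵥ w)‖ ≤ ‖Psibar ⊙ C‖ := by
    have := Matrix.l2_opNorm_mulVec (Psibar ⊙ C) v
    rwa [hvnorm, mul_one] at this
  -- combine upper bounds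
  have hWbound : ‖(EuclideanSpace.equiv (Fin K) ℝ).symm
      (((2:ℝ) • (Psibar ⊙ C) - E + (2:ℝ) • H) *ᵥ w)‖
      ≤ 2 * ‖Psibar ⊙ C‖ + (nmax : ℝ) * supJ + 2 * ((K : ℝ) * cH) := by
    have hvec : ((2:ℝ) • (Psibar ⊙ C) - E + (2:ℝ) • H) *ᵥ w
        = (2:ℝ) • ((Psibar ⊙ C) *ᵥ w) - E *ᵥ w + (2:ℝ) • (H *ᵥ w) := by
      rw [Matrix.add_mulVec, Matrix.sub_mulVec, Matrix.smul_mulVec,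
        Matrix.smul_mulVec]
    rw [hvec, map_add, map_sub, _root_.map_smul, _root_.map_smul]
    calc ‖(2:ℝ) • (EuclideanSpace.equiv (Fin K) ℝ).symm ((Psibar ⊙ C) *ᵥ w)
          - (EuclideanSpace.equiv (Fin K) ℝ).symm (E *ᵥ w)
          + (2:ℝ) • (EuclideanSpace.equiv (Fin K) ℝ).symm (H *ᵥ w)‖
        ≤ ‖(2:ℝ) • (EuclideanSpace.equiv (Fin K) ℝ).symm ((Psibar ⊙ C) *ᵥ w)
          - (EuclideanSpace.equiv (Fin K) ℝ).symm (E *ᵥ w)‖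
          + ‖(2:ℝ) • (EuclideanSpace.equiv (Fin K) ℝ).symm (H *ᵥ w)‖ := norm_add_le _ _
      _ ≤ ‖(2:ℝ) • (EuclideanSpace.equiv (Fin K) ℝ).symm ((Psibar ⊙ C) *ᵥ w)‖
          + ‖(EuclideanSpace.equiv (Fin K) ℝ).symm (E *ᵥ w)‖
          + ‖(2:ℝ) • (EuclideanSpace.equiv (Fin K) ℝ).symm (H *ᵥ w)‖ := by
          have := norm_sub_le ((2:ℝ) • (EuclideanSpace.equiv (Fin K) ℝ).symm ((Psibar ⊙ C) *ᵥ w))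
            ((EuclideanSpace.equiv (Fin K) ℝ).symm (E *ᵥ w))
          linarith
      _ ≤ 2 * ‖Psibar ⊙ C‖ + (nmax : ℝ) * supJ + 2 * ((K : ℝ) * cH) := by
          rw [norm_smul, norm_smul]
          simp only [Real.norm_ofNat]
          have h2 : (0:ℝ) ≤ 2 := by norm_num
          nlinarith [hPsib, hEbound, hHb]
  -- combine
  have hsplitnorm : |lam| ≥ (nmin : ℝ) * ((nmin : ℝ) * γ)
      - (2 * ‖Psibar ⊙ C‖ + (nmax : ℝ) * supJ + 2 * ((K : ℝ) * cH)) := by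
    have hadd : (EuclideanSpace.equiv (Fin K) ℝ).symm (F *ᵥ w)
        = (EuclideanSpace.equiv (Fin K) ℝ).symm ((D * B * D) *ᵥ w)
          + (EuclideanSpace.equiv (Fin K) ℝ).symm
            (((2:ℝ) • (Psibar ⊙ C) - E + (2:ℝ) • H) *ᵥ w) := by
      rw [← map_add]
      congr 1
      rw [← Matrix.add_mulVec, ← hFdecomp]
    have htri : ‖(EuclideanSpace.equiv (Fin K) ℝ).symm ((D * B * D) *ᵥ w)‖
        ≤ ‖(EuclideanSpace.equiv (Fin K) ℝ).symm (F *ᵥ w)‖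
          + ‖(EuclideanSpace.equiv (Fin K) ℝ).symm
            (((2:ℝ) • (Psibar ⊙ C) - E + (2:ℝ) • H) *ᵥ w)‖ := by
      have heq : (EuclideanSpace.equiv (Fin K) ℝ).symm ((D * B * D) *ᵥ w)
          = (EuclideanSpace.equiv (Fin K) ℝ).symm (F *ᵥ w)
            - (EuclideanSpace.equiv (Fin K) ℝ).symm
              (((2:ℝ) • (Psibar ⊙ C) - E + (2:ℝ) • H) *ᵥ w) := by
        rw [hadd]; abel
      rw [heq]
      exact norm_sub_le _ _
    rw [h1] at htri
    linarith [hmain, hWbound, htri]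
  have hKcH : (K : ℝ) * cH = (1 - δ) * (nmin : ℝ) ^ 2 * γ := by
    rw [hcH]
    have hK0 : (K : ℝ) ≠ 0 := Nat.cast_ne_zero.mpr hK.ne'
    field_simp
  rw [hKcH] at hsplitnorm
  have : (nmin : ℝ) * ((nmin : ℝ) * γ) = (nmin : ℝ) ^ 2 * γ := by ring
  rw [this] at hsplitnorm
  linarith [hsplitnorm]
end

section
/- Let Z ∈ {0,1}^{n×K} be a membership matrix (exactly one 1 per row) with all community sizes n_k = (ZᵀZ)_{kk} positive, and let F ∈ ℝ^{K×K} be symmetric. Then the characteristic polynomial of the n×n matrix Z F Zᵀ equals X^{n−K} times the characteristic polynomial of the K×K matrix Θ^{1/2} F Θ^{1/2}, where Θ = ZᵀZ; in particular, the nonzero eigenvalues of Z F Zᵀ, counted with multiplicity, coincide with the nonzero eigenvalues of Θ^{1/2} F Θ^{1/2}. -/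
open Matrix BigOperators Polynomial

lemma charmatrix_eq_smul_sub {m : Type*} [Fintype m] [DecidableEq m]
    (M : Matrix m m ℝ) :
    charmatrix M = (X : ℝ[X]) • (1 : Matrix m m ℝ[X]) - M.map (C : ℝ →+* ℝ[X]) := by
  rw [charmatrix]
  congr 1
  ext i j
  simp [Matrix.scalar_apply, Matrix.diagonal_apply, Matrix.one_apply, mul_ite]

lemma charpoly_mul_comm_aux {m p : Type*} [Fintype m] [Fintype p] [DecidableEq m] [DecidableEq p]
    (A : Matrix m p ℝ) (B : Matrix p m ℝ) :
    X ^ (Fintype.card p) * (A * B).charpoly = X ^ (Fintype.card m) * (B * A).charpoly := by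
  classical
  set A' := A.map (C : ℝ →+* ℝ[X]) with hA'
  set B' := B.map (C : ℝ →+* ℝ[X]) with hB'
  set M : Matrix (m ⊕ p) (m ⊕ p) ℝ[X] :=
    fromBlocks ((X : ℝ[X]) • 1) A' B' 1 with hM
  have hAB : (A * B).map (C : ℝ →+* ℝ[X]) = A' * B' := Matrix.map_mul
  have hBA : (B * A).map (C : ℝ →+* ℝ[X]) = B' * A' := Matrix.map_mul
  have hdet1 : M.det = (A * B).charpoly := by
    have e1 : (fromBlocks 1 (-A') 0 (1 : Matrix p p ℝ[X])) * M
        = fromBlocks ((X : ℝ[X]) • 1 - A' * B') 0 B' 1 := by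
      rw [hM, fromBlocks_multiply]
      congr 1 <;> simp [sub_eq_add_neg]
    have d1 : (fromBlocks 1 (-A') 0 (1 : Matrix p p ℝ[X])).det = 1 := by
      rw [det_fromBlocks_zero₂₁]; simp
    have := congrArg Matrix.det e1
    rw [det_mul, d1, one_mul, det_fromBlocks_zero₁₂, det_one, mul_one] at this
    rw [this, Matrix.charpoly, charmatrix_eq_smul_sub, hAB]
  have hdet2 : (X : ℝ[X]) ^ (Fintype.card p) * M.det
      = (X : ℝ[X]) ^ (Fintype.card m) * (B * A).charpoly := by
    have e2 : (fromBlocks 1 0 (-B') ((X : ℝ[X]) • (1 : Matrix p p ℝ[X]))) * M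
        = fromBlocks ((X : ℝ[X]) • 1) A' 0 ((X : ℝ[X]) • 1 - B' * A') := by
      rw [hM, fromBlocks_multiply]
      congr 1 <;> simp [Matrix.smul_mul, Matrix.mul_smul, sub_eq_add_neg, add_comm]
    have d2 : (fromBlocks 1 0 (-B') ((X : ℝ[X]) • (1 : Matrix p p ℝ[X]))).det
        = (X : ℝ[X]) ^ (Fintype.card p) := by
      rw [det_fromBlocks_zero₁₂]; simp [det_smul]
    have := congrArg Matrix.det e2
    rw [det_mul, d2, det_fromBlocks_zero₂₁, det_smul, det_one, mul_one] at this
    rw [this, Matrix.charpoly, charmatrix_eq_smul_sub, hBA]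
  rw [hdet1] at hdet2
  exact hdet2

lemma charpoly_mul_comm_sq {p : Type*} [Fintype p] [DecidableEq p]
    (A B : Matrix p p ℝ) : (A * B).charpoly = (B * A).charpoly := by
  have h := charpoly_mul_comm_aux A B
  exact mul_left_cancel₀ (pow_ne_zero _ Polynomial.X_ne_zero) h

lemma charpoly_mul_comm_rect {m p : Type*} [Fintype m] [Fintype p] [DecidableEq m] [DecidableEq p]
    (A : Matrix m p ℝ) (B : Matrix p m ℝ) (h : Fintype.card p ≤ Fintype.card m) :
    (A * B).charpoly = X ^ (Fintype.card m - Fintype.card p) * (B * A).charpoly := by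
  have key := charpoly_mul_comm_aux A B
  have hn : Fintype.card m = Fintype.card p + (Fintype.card m - Fintype.card p) :=
    (Nat.add_sub_cancel' h).symm
  rw [hn, pow_add, mul_assoc] at key
  exact mul_left_cancel₀ (pow_ne_zero _ Polynomial.X_ne_zero) key

/-- The characteristic polynomial of `Z F Zᵀ` equals `X^{n−K}` times the characteristic
polynomial of `Θ^{1/2} F Θ^{1/2}` with `Θ = ZᵀZ`; in particular the nonzero eigenvalues of
the two matrices coincide with multiplicity. -/
theorem charpoly_ZFZt
    (n K : ℕ) (hK : 0 < K) (hKn : K ≤ n)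
    (z : Fin n → Fin K)
    (Z : Matrix (Fin n) (Fin K) ℝ)
    (hZ : ∀ u k, Z u k = if z u = k then 1 else 0)
    (hpos : ∀ k : Fin K, 0 < (Finset.univ.filter (fun u : Fin n => z u = k)).card)
    (F : Matrix (Fin K) (Fin K) ℝ) (hF : F.IsHermitian)
    (sqrtΘ : Matrix (Fin K) (Fin K) ℝ)
    (hsqrtΘ : sqrtΘ = Matrix.diagonal (fun k => Real.sqrt ((Zᵀ * Z) k k))) :
    (Z * F * Zᵀ).charpoly = X ^ (n - K) * (sqrtΘ * F * sqrtΘ).charpoly ∧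
    ∀ μ : ℝ, μ ≠ 0 →
      (Z * F * Zᵀ).charpoly.rootMultiplicity μ
        = (sqrtΘ * F * sqrtΘ).charpoly.rootMultiplicity μ := by
  classical
  -- Θ is diagonal with nonnegative entries
  have hΘnn : ∀ k, 0 ≤ (Zᵀ * Z) k k := by
    intro k
    rw [Matrix.mul_apply]
    apply Finset.sum_nonneg
    intro u _
    simp only [Matrix.transpose_apply, hZ]
    positivity
  have hΘdiag : Zᵀ * Z = Matrix.diagonal (fun k => (Zᵀ * Z) k k) := by
    ext k l
    rcases eq_or_ne k l with rfl | h
    · simp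
    · rw [Matrix.diagonal_apply_ne _ h, Matrix.mul_apply]
      apply Finset.sum_eq_zero
      intro u _
      simp only [Matrix.transpose_apply, hZ]
      rcases eq_or_ne (z u) k with hk | hk
      · have : z u ≠ l := hk ▸ h
        simp [hk, this, h]
      · simp [hk]
  have hSS : sqrtΘ * sqrtΘ = Zᵀ * Z := by
    rw [hsqrtΘ, Matrix.diagonal_mul_diagonal]
    conv_rhs => rw [hΘdiag]
    exact congrArg Matrix.diagonal (funext fun k => Real.mul_self_sqrt (hΘnn k))
  -- the main charpoly identity
  have h1 : (Z * F * Zᵀ).charpoly = X ^ (n - K) * ((F * Zᵀ) * Z).charpoly := by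
    rw [Matrix.mul_assoc Z F Zᵀ]
    have := charpoly_mul_comm_rect Z (F * Zᵀ) (by simpa using hKn)
    simpa using this
  have h2 : ((F * Zᵀ) * Z).charpoly = (sqrtΘ * F * sqrtΘ).charpoly := by
    have e : F * Zᵀ * Z = (F * sqrtΘ) * sqrtΘ := by
      rw [Matrix.mul_assoc F Zᵀ Z, ← hSS, ← Matrix.mul_assoc]
    rw [e, charpoly_mul_comm_sq, ← mul_assoc]
  have hmain : (Z * F * Zᵀ).charpoly = X ^ (n - K) * (sqrtΘ * F * sqrtΘ).charpoly := by
    rw [h1, h2]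
  refine ⟨hmain, ?_⟩
  intro μ hμ
  rw [hmain]
  have hq : (sqrtΘ * F * sqrtΘ).charpoly ≠ 0 := (Matrix.charpoly_monic _).ne_zero
  rw [Polynomial.rootMultiplicity_mul
    (mul_ne_zero (pow_ne_zero _ Polynomial.X_ne_zero) hq)]
  have hx : Polynomial.rootMultiplicity μ ((X : ℝ[X]) ^ (n - K)) = 0 := by
    apply Polynomial.rootMultiplicity_eq_zero
    simp [Polynomial.IsRoot, hμ]
  rw [hx, zero_add]
end

section
/- Let Z ∈ {0,1}^{n×K} be a membership matrix with all community sizes n_k positive, n_min = min_k n_k, let F ∈ ℝ^{K×K} be symmetric, and set E := Z F Zᵀ − diag(Z F Zᵀ), where diag(M) is the diagonal matrix with the same diagonal as M. Order the eigenvalues of the symmetric matrix E by decreasing absolute value, |λ_1(E)| ≥ … ≥ |λ_n(E)|. Then |λ_{K+1}(E)| ≤ max_{1≤k≤K} |F_{kk}| and |λ_K(E)| ≥ n_min · min_{1≤i≤K} |λ_i(F)| − max_{1≤k≤K} |F_{kk}|. -/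
open Matrix BigOperators

noncomputable def toE {m : Type*} (y : m → ℝ) : EuclideanSpace ℝ m :=
  (WithLp.equiv 2 (m → ℝ)).symm y

@[simp] lemma toE_apply {m : Type*} (y : m → ℝ) (i : m) : toE y i = y i := rfl

lemma euc_norm_sq {m : Type*} [Fintype m] (x : EuclideanSpace ℝ m) :
    ‖x‖^2 = ∑ i, (x i)^2 := by
  rw [EuclideanSpace.norm_eq, Real.sq_sqrt (by positivity)]
  simp [Real.norm_eq_abs, sq_abs]

lemma le_of_sq_le_sq' {a b : ℝ} (hb : 0 ≤ b) (h : a^2 ≤ b^2) (ha : 0 ≤ a) : a ≤ b := by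
  nlinarith

lemma repr_mulVec {m : Type*} [Fintype m] [DecidableEq m] (M : Matrix m m ℝ)
    (hM : M.IsHermitian) (x : EuclideanSpace ℝ m) (i : m) :
    hM.eigenvectorBasis.repr (toE (M.mulVec x)) i
      = hM.eigenvalues i * hM.eigenvectorBasis.repr x i := by
  rw [OrthonormalBasis.repr_apply_apply, OrthonormalBasis.repr_apply_apply]
  simp only [PiLp.inner_apply, RCLike.inner_apply, starRingEnd_apply, star_trivial]
  rw [Finset.sum_congr rfl fun u _ => mul_comm ((toE (M *ᵥ x)).ofLp u) ((hM.eigenvectorBasis i).ofLp u),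
    Finset.sum_congr rfl fun u _ => mul_comm (x.ofLp u) ((hM.eigenvectorBasis i).ofLp u)]
  have hsym : Mᵀ = M := by
    have := hM.eq; rwa [conjTranspose_eq_transpose_of_trivial] at this
  have hev : M *ᵥ (hM.eigenvectorBasis i : m → ℝ)
      = hM.eigenvalues i • (hM.eigenvectorBasis i : m → ℝ) := hM.mulVec_eigenvectorBasis i
  calc ∑ u, (hM.eigenvectorBasis i) u * (M *ᵥ x) u
      = (hM.eigenvectorBasis i : m → ℝ) ⬝ᵥ (M *ᵥ x) := rfl
    _ = ((hM.eigenvectorBasis i : m → ℝ) ᵥ* M) ⬝ᵥ x := dotProduct_mulVec _ _ _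
    _ = (M *ᵥ (hM.eigenvectorBasis i : m → ℝ)) ⬝ᵥ x := by rw [← mulVec_transpose, hsym]
    _ = (hM.eigenvalues i • (hM.eigenvectorBasis i : m → ℝ)) ⬝ᵥ x := by rw [hev]
    _ = hM.eigenvalues i * ∑ u, (hM.eigenvectorBasis i) u * x u := by
        simp [smul_dotProduct, dotProduct, smul_eq_mul, mul_assoc, Finset.mul_sum]

lemma norm_mulVec_ge {m : Type*} [Fintype m] [DecidableEq m] (M : Matrix m m ℝ)
    (hM : M.IsHermitian) (c : ℝ) (hc : 0 ≤ c) (x : EuclideanSpace ℝ m)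
    (h : ∀ i, |hM.eigenvalues i| < c → hM.eigenvectorBasis.repr x i = 0) :
    c * ‖x‖ ≤ ‖toE (M.mulVec x)‖ := by
  apply le_of_sq_le_sq' (norm_nonneg _) _ (by positivity)
  have h1 : ‖toE (M.mulVec x)‖^2
      = ∑ i, (hM.eigenvalues i * hM.eigenvectorBasis.repr x i)^2 := by
    have e1 : ‖toE (M.mulVec x)‖ = ‖hM.eigenvectorBasis.repr (toE (M.mulVec x))‖ :=
      (hM.eigenvectorBasis.repr.norm_map _).symm
    rw [e1, euc_norm_sq]
    exact Finset.sum_congr rfl fun i _ => by exact repr_mulVec M hM x i ▸ rfl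
  have h2 : ‖x‖^2 = ∑ i, (hM.eigenvectorBasis.repr x i)^2 := by
    have e2 : ‖x‖ = ‖hM.eigenvectorBasis.repr x‖ := (hM.eigenvectorBasis.repr.norm_map _).symm
    rw [e2, euc_norm_sq]
  rw [h1, mul_pow, h2, Finset.mul_sum]
  apply Finset.sum_le_sum
  intro i _
  rcases lt_or_ge (|hM.eigenvalues i|) c with hlt | hge
  · rw [h i hlt]; simp
  · rw [mul_pow]
    apply mul_le_mul_of_nonneg_right _ (sq_nonneg _)
    calc c^2 ≤ |hM.eigenvalues i|^2 := by nlinarith [abs_nonneg (hM.eigenvalues i)]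
      _ = (hM.eigenvalues i)^2 := sq_abs _

lemma norm_mulVec_le {m : Type*} [Fintype m] [DecidableEq m] (M : Matrix m m ℝ)
    (hM : M.IsHermitian) (c : ℝ) (hc : 0 ≤ c) (x : EuclideanSpace ℝ m)
    (h : ∀ i, c < |hM.eigenvalues i| → hM.eigenvectorBasis.repr x i = 0) :
    ‖toE (M.mulVec x)‖ ≤ c * ‖x‖ := by
  apply le_of_sq_le_sq' (by positivity) _ (norm_nonneg _)
  have h1 : ‖toE (M.mulVec x)‖^2
      = ∑ i, (hM.eigenvalues i * hM.eigenvectorBasis.repr x i)^2 := by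
    have e1 : ‖toE (M.mulVec x)‖ = ‖hM.eigenvectorBasis.repr (toE (M.mulVec x))‖ :=
      (hM.eigenvectorBasis.repr.norm_map _).symm
    rw [e1, euc_norm_sq]
    exact Finset.sum_congr rfl fun i _ => by exact repr_mulVec M hM x i ▸ rfl
  have h2 : ‖x‖^2 = ∑ i, (hM.eigenvectorBasis.repr x i)^2 := by
    have e2 : ‖x‖ = ‖hM.eigenvectorBasis.repr x‖ := (hM.eigenvectorBasis.repr.norm_map _).symm
    rw [e2, euc_norm_sq]
  rw [h1, mul_pow, h2, Finset.mul_sum]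
  apply Finset.sum_le_sum
  intro i _
  rcases lt_or_ge c (|hM.eigenvalues i|) with hlt | hge
  · rw [h i hlt]; simp
  · rw [mul_pow]
    apply mul_le_mul_of_nonneg_right _ (sq_nonneg _)
    calc (hM.eigenvalues i)^2 = |hM.eigenvalues i|^2 := (sq_abs _).symm
      _ ≤ c^2 := by nlinarith [abs_nonneg (hM.eigenvalues i)]

lemma diag_norm_le {m : Type*} [Fintype m] [DecidableEq m] (g : m → ℝ) (d : ℝ)
    (hd : 0 ≤ d) (hg : ∀ u, |g u| ≤ d) (x : EuclideanSpace ℝ m) :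
    ‖toE ((Matrix.diagonal g).mulVec x)‖ ≤ d * ‖x‖ := by
  apply le_of_sq_le_sq' (by positivity) _ (norm_nonneg _)
  rw [euc_norm_sq, mul_pow, euc_norm_sq, Finset.mul_sum]
  apply Finset.sum_le_sum
  intro u _
  have h1 : (toE ((Matrix.diagonal g).mulVec x)) u = g u * x u := by
    simp [Matrix.mulVec_diagonal]
  rw [h1, mul_pow]
  apply mul_le_mul_of_nonneg_right _ (sq_nonneg _)
  calc (g u)^2 = |g u|^2 := (sq_abs _).symm
    _ ≤ d^2 := by nlinarith [abs_nonneg (g u), hg u]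

lemma exists_mulVec_eq_zero' {p q : ℕ} (hpq : p < q) (B : Matrix (Fin p) (Fin q) ℝ) :
    ∃ y : Fin q → ℝ, y ≠ 0 ∧ B *ᵥ y = 0 := by
  have hni : ¬ Function.Injective B.mulVecLin := by
    intro hinj
    have h := LinearMap.finrank_le_finrank_of_injective hinj
    rw [Module.finrank_fin_fun, Module.finrank_fin_fun] at h
    omega
  rw [Function.not_injective_iff] at hni
  obtain ⟨a, b, hab, hne⟩ := hni
  exact ⟨a - b, sub_ne_zero_of_ne hne, by
    have h0 : B.mulVecLin (a - b) = 0 := by rw [map_sub, hab, sub_self]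
    simpa [Matrix.mulVecLin_apply] using h0⟩

/-- For `E = Z F Zᵀ − diag(Z F Zᵀ)`, with eigenvalues of `E` ordered by decreasing absolute
value, `|λ_{K+1}(E)| ≤ max_k |F_kk|` and `|λ_K(E)| ≥ n_min · minᵢ|λᵢ(F)| − max_k |F_kk|`. -/
theorem eigenvalue_gap_E
    (n K : ℕ) (hK : 0 < K) (hnK : K < n)
    (z : Fin n → Fin K)
    (Z : Matrix (Fin n) (Fin K) ℝ)
    (hZ : ∀ u k, Z u k = if z u = k then 1 else 0)
    (nsize : Fin K → ℕ)
    (hnsize : ∀ k, nsize k = (Finset.univ.filter (fun u : Fin n => z u = k)).card)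
    (hpos : ∀ k, 0 < nsize k)
    (nmin : ℕ)
    (hnmin : nmin = Finset.univ.inf' ⟨⟨0, hK⟩, Finset.mem_univ _⟩ nsize)
    (F : Matrix (Fin K) (Fin K) ℝ) (hF : F.IsHermitian)
    (E : Matrix (Fin n) (Fin n) ℝ)
    (hE : E = Z * F * Zᵀ - Matrix.diagonal (fun u => (Z * F * Zᵀ) u u))
    (hEherm : E.IsHermitian)
    -- an enumeration of the eigenvalues of `E` in decreasing order of absolute value
    (e : Fin n → ℝ) (σ : Equiv.Perm (Fin n))
    (he : e = hEherm.eigenvalues ∘ σ)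
    (hdec : Antitone (fun i => |e i|)) :
    |e ⟨K, hnK⟩| ≤ Finset.univ.sup' ⟨⟨0, hK⟩, Finset.mem_univ _⟩ (fun k => |F k k|) ∧
    |e ⟨K - 1, by omega⟩| ≥
      (nmin : ℝ) *
        Finset.univ.inf' ⟨⟨0, hK⟩, Finset.mem_univ _⟩ (fun i => |hF.eigenvalues i|)
      - Finset.univ.sup' ⟨⟨0, hK⟩, Finset.mem_univ _⟩ (fun k => |F k k|) := by
  set d := Finset.univ.sup' ⟨⟨0, hK⟩, Finset.mem_univ _⟩ (fun k => |F k k|) with hdd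
  set mF := Finset.univ.inf' ⟨⟨0, hK⟩, Finset.mem_univ _⟩ (fun i => |hF.eigenvalues i|)
    with hmF
  have hdk : ∀ k, |F k k| ≤ d := fun k => by
    rw [hdd]; exact Finset.le_sup' (fun k => |F k k|) (Finset.mem_univ k)
  have hd0 : (0:ℝ) ≤ d := le_trans (abs_nonneg (F ⟨0,hK⟩ ⟨0,hK⟩)) (hdk ⟨0,hK⟩)
  have hm0 : (0:ℝ) ≤ mF := by
    rw [hmF]; exact Finset.le_inf' _ _ (fun i _ => abs_nonneg _)
  have hmle : ∀ i, mF ≤ |hF.eigenvalues i| := fun i => by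
    rw [hmF]; exact Finset.inf'_le _ (Finset.mem_univ i)
  set v := hEherm.eigenvectorBasis with hv
  set μ := hEherm.eigenvalues with hμ
  have heμ : ∀ j, e j = μ (σ j) := fun j => by rw [he]; rfl
  have hdiagE : ∀ u, (Z * F * Zᵀ) u u = F (z u) (z u) := by
    intro u
    simp [Matrix.mul_apply, hZ, ite_mul, mul_ite, Finset.sum_ite_eq]
  have hgd : ∀ u, |(Z * F * Zᵀ) u u| ≤ d := fun u => by rw [hdiagE]; exact hdk _
  constructor
  · -- upper bound on |e K|
    by_contra hcon
    push_neg at hcon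
    set c := |e ⟨K, hnK⟩| with hc
    have hc0 : (0:ℝ) ≤ c := abs_nonneg _
    set cast1 : Fin (K+1) → Fin n := Fin.castLE (by omega) with hcast1
    set B : Matrix (Fin K) (Fin (K+1)) ℝ :=
      Matrix.of fun k j => ((F * Zᵀ) *ᵥ (v (σ (cast1 j)) : Fin n → ℝ)) k with hB
    obtain ⟨y, hy0, hBy⟩ := exists_mulVec_eq_zero' (by omega) B
    set x0 : Fin n → ℝ := ∑ j : Fin (K+1), y j • (v (σ (cast1 j)) : Fin n → ℝ) with hx0
    set x : EuclideanSpace ℝ (Fin n) := toE x0 with hx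
    have hxE : x = ∑ j : Fin (K+1), y j • v (σ (cast1 j)) := by
      ext i; simp [hx, hx0, toE]
    have hinj : Function.Injective fun j : Fin (K+1) => σ (cast1 j) := by
      intro a b hab
      exact Fin.castLE_injective _ (σ.injective hab)
    have hrepr : ∀ i, v.repr x i
        = ∑ j : Fin (K+1), y j * (if i = σ (cast1 j) then 1 else 0) := by
      intro i
      rw [hxE, OrthonormalBasis.repr_apply_apply, inner_sum]
      refine Finset.sum_congr rfl fun j _ => ?_
      rw [real_inner_smul_right]
      congr 1
      exact orthonormal_iff_ite.mp v.orthonormal i (σ (cast1 j))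
    -- x ≠ 0
    obtain ⟨j0, hj0'⟩ := Function.ne_iff.mp hy0
    have hj0 : y j0 ≠ 0 := hj0'
    have hxne : x ≠ 0 := by
      intro h0
      apply hj0
      have h1 : v.repr x (σ (cast1 j0)) = 0 := by rw [h0]; simp
      rw [hrepr] at h1
      rwa [Finset.sum_eq_single j0 (fun b _ hb => by
          have hne : σ (cast1 j0) ≠ σ (cast1 b) := fun hcc => hb (hinj hcc.symm)
          simp [hne]) (fun h => absurd (Finset.mem_univ j0) h), if_pos rfl, mul_one] at h1
    have hxpos : 0 < ‖x‖ := norm_pos_iff.mpr hxne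
    -- (F * Zᵀ) kills x
    have hFZx : (F * Zᵀ) *ᵥ x0 = 0 := by
      have h1 : (F * Zᵀ).mulVecLin x0
          = ∑ j : Fin (K+1), y j • ((F * Zᵀ) *ᵥ (v (σ (cast1 j)) : Fin n → ℝ)) := by
        rw [hx0, map_sum]
        exact Finset.sum_congr rfl fun j _ => by rw [_root_.map_smul]; rfl
      have h2 : (F * Zᵀ) *ᵥ x0 = B *ᵥ y := by
        rw [show (F * Zᵀ) *ᵥ x0 = (F * Zᵀ).mulVecLin x0 from rfl, h1]
        funext k
        rw [Finset.sum_apply]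
        simp only [Pi.smul_apply, smul_eq_mul]
        rw [Matrix.mulVec, dotProduct]
        exact Finset.sum_congr rfl fun j _ => by rw [hB]; exact (mul_comm _ _)
      rw [h2, hBy]
    have hAx : (Z * F * Zᵀ) *ᵥ x0 = 0 := by
      rw [Matrix.mul_assoc, ← Matrix.mulVec_mulVec, hFZx, Matrix.mulVec_zero]
    have hEx : E *ᵥ x0 = -((Matrix.diagonal (fun u => (Z * F * Zᵀ) u u)) *ᵥ x0) := by
      rw [hE, Matrix.sub_mulVec, hAx, zero_sub]
    -- lower bound on ‖E x‖
    have hcond : ∀ i, |μ i| < c → v.repr x i = 0 := by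
      intro i hi
      rw [hrepr]
      apply Finset.sum_eq_zero
      intro j _
      rcases eq_or_ne i (σ (cast1 j)) with hij | hij
      · exfalso
        have hle : (cast1 j : Fin n) ≤ ⟨K, hnK⟩ := by
          rw [hcast1]
          simp only [Fin.le_def, Fin.coe_castLE]
          omega
        have h2 : c ≤ |e (cast1 j)| := hdec hle
        rw [heμ (cast1 j)] at h2
        rw [hij] at hi
        linarith
      · simp [hij]
    have hlow : c * ‖x‖ ≤ ‖toE (E.mulVec x)‖ :=
      norm_mulVec_ge E hEherm c hc0 x hcond
    have hup : ‖toE (E.mulVec x)‖ ≤ d * ‖x‖ := by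
      have h1 : toE (E.mulVec x)
          = -(toE ((Matrix.diagonal (fun u => (Z * F * Zᵀ) u u)).mulVec x)) := by
        have := congrArg toE hEx
        exact this
      rw [h1, norm_neg]
      exact diag_norm_le _ d hd0 hgd x
    have : c ≤ d := le_of_mul_le_mul_right (le_trans hlow hup) hxpos
    linarith
  · -- lower bound on |e (K-1)|
    rw [ge_iff_le]
    by_cases hc2 : (nmin:ℝ) * mF - d ≤ 0
    · linarith [abs_nonneg (e ⟨K-1, by omega⟩)]
    push_neg at hc2
    set cK : Fin n := ⟨K-1, by omega⟩ with hcK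
    set cast2 : Fin (K-1) → Fin n := Fin.castLE (by omega) with hcast2
    set B2 : Matrix (Fin (K-1)) (Fin K) ℝ :=
      Matrix.of (fun j k => ∑ u, (v (σ (cast2 j))) u * Z u k) with hB2
    obtain ⟨y, hy0', hBy⟩ := exists_mulVec_eq_zero' (by omega) B2
    set x0 : Fin n → ℝ := Z *ᵥ y with hx0
    set x : EuclideanSpace ℝ (Fin n) := toE x0 with hx
    have hxu : ∀ u, x0 u = y (z u) := by
      intro u
      rw [hx0]
      simp [Matrix.mulVec, dotProduct, hZ, ite_mul, Finset.sum_ite_eq]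
    have hker : ∀ j : Fin (K-1), v.repr x (σ (cast2 j)) = 0 := by
      intro j
      have h1 : v.repr x (σ (cast2 j)) = (B2 *ᵥ y) j := by
        rw [OrthonormalBasis.repr_apply_apply]
        simp only [PiLp.inner_apply, RCLike.inner_apply, starRingEnd_apply, star_trivial]
        rw [Finset.sum_congr rfl fun u _ => mul_comm (x.ofLp u) ((v (σ (cast2 j))).ofLp u)]
        calc ∑ u, (v (σ (cast2 j))) u * x u
            = ∑ u, ∑ k, (v (σ (cast2 j))) u * (Z u k * y k) := by
              refine Finset.sum_congr rfl fun u _ => ?_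
              rw [show (x : Fin n → ℝ) u = ∑ k, Z u k * y k from rfl, Finset.mul_sum]
          _ = ∑ k, ∑ u, (v (σ (cast2 j))) u * (Z u k * y k) := Finset.sum_comm
          _ = (B2 *ᵥ y) j := by
              refine Finset.sum_congr rfl fun k _ => ?_
              rw [hB2]
              simp only [Matrix.of_apply, Finset.sum_mul]
              exact Finset.sum_congr rfl fun u _ => by ring
      rw [h1, hBy]
      rfl
    have hsumz : ∀ g : Fin K → ℝ, ∑ u, g (z u) = ∑ k, (nsize k : ℝ) * g k := by
      intro g
      have h1 : ∀ u : Fin n, g (z u) = ∑ k, if z u = k then g k else 0 := fun u => by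
        rw [Finset.sum_ite_eq]
        simp
      calc ∑ u, g (z u) = ∑ u, ∑ k, if z u = k then g k else 0 :=
            Finset.sum_congr rfl fun u _ => h1 u
        _ = ∑ k, ∑ u : Fin n, if z u = k then g k else 0 := Finset.sum_comm
        _ = ∑ k, (nsize k : ℝ) * g k := by
            refine Finset.sum_congr rfl fun k _ => ?_
            rw [← Finset.sum_filter, Finset.sum_const, hnsize k, nsmul_eq_mul]
    have hnormx : ‖x‖^2 = ∑ k, (nsize k:ℝ) * (y k)^2 := by
      rw [euc_norm_sq]
      calc ∑ i, (x i)^2 = ∑ i, (y (z i))^2 :=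
            Finset.sum_congr rfl fun i _ => by rw [show x i = x0 i from rfl, hxu i]
        _ = ∑ k, (nsize k:ℝ) * (y k)^2 := hsumz (fun k => (y k)^2)
    have hnmin_le : ∀ k, (nmin:ℝ) ≤ (nsize k:ℝ) := fun k => by
      have : nmin ≤ nsize k := by
        rw [hnmin]
        exact Finset.inf'_le _ (Finset.mem_univ k)
      exact_mod_cast this
    -- x ≠ 0
    obtain ⟨k0, hk0'⟩ := Function.ne_iff.mp hy0'
    have hk0 : y k0 ≠ 0 := hk0'
    have hxsqpos : 0 < ‖x‖^2 := by
      rw [hnormx]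
      apply Finset.sum_pos' (fun k _ => by positivity)
      refine ⟨k0, Finset.mem_univ _, ?_⟩
      have h1 : (0:ℝ) < (nsize k0 : ℝ) := by exact_mod_cast hpos k0
      have h2 : (0:ℝ) < (y k0)^2 :=
        lt_of_le_of_ne (sq_nonneg _) (Ne.symm (pow_ne_zero 2 hk0))
      positivity
    have hxpos : 0 < ‖x‖ := by
      by_contra h
      push_neg at h
      have : ‖x‖ = 0 := le_antisymm h (norm_nonneg x)
      rw [this] at hxsqpos
      norm_num at hxsqpos
    -- A x in terms of w
    set w : Fin K → ℝ := fun k => (nsize k : ℝ) * y k with hwdef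
    have hZtZ : Zᵀ *ᵥ x0 = w := by
      funext k
      have h1 : ∀ u, Zᵀ k u * x0 u = if z u = k then y k else 0 := by
        intro u
        rw [Matrix.transpose_apply, hxu u, hZ]
        by_cases h : z u = k <;> simp [h]
      calc (Zᵀ *ᵥ x0) k = ∑ u, Zᵀ k u * x0 u := rfl
        _ = ∑ u : Fin n, if z u = k then y k else 0 := Finset.sum_congr rfl fun u _ => h1 u
        _ = (nsize k : ℝ) * y k := by
            rw [← Finset.sum_filter, Finset.sum_const, hnsize k, nsmul_eq_mul]
    have hAx : (Z * F * Zᵀ) *ᵥ x0 = Z *ᵥ (F *ᵥ w) := by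
      rw [← Matrix.mulVec_mulVec, hZtZ, ← Matrix.mulVec_mulVec]
    have hZg : ∀ (g : Fin K → ℝ) (u : Fin n), (Z *ᵥ g) u = g (z u) := by
      intro g u
      simp [Matrix.mulVec, dotProduct, hZ, ite_mul, Finset.sum_ite_eq]
    have hnormAx : ‖toE ((Z * F * Zᵀ) *ᵥ x0)‖^2 = ∑ k, (nsize k:ℝ) * ((F *ᵥ w) k)^2 := by
      rw [euc_norm_sq]
      calc ∑ u, ((toE ((Z * F * Zᵀ) *ᵥ x0)) u)^2
          = ∑ u, ((F *ᵥ w) (z u))^2 := by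
            refine Finset.sum_congr rfl fun u _ => ?_
            rw [toE_apply, hAx, hZg]
        _ = ∑ k, (nsize k:ℝ) * ((F *ᵥ w) k)^2 := hsumz (fun k => ((F *ᵥ w) k)^2)
    set w' : EuclideanSpace ℝ (Fin K) := toE w with hw'acc
    have hFw' : mF * ‖w'‖ ≤ ‖toE (F.mulVec w')‖ :=
      norm_mulVec_ge F hF mF hm0 w'
        (fun i hi => absurd (hmle i) (not_le.mpr hi))
    have hFw2 : ‖toE (F.mulVec w')‖^2 = ∑ k, ((F *ᵥ w) k)^2 := by
      rw [euc_norm_sq]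
      rfl
    have hw2 : ‖w'‖^2 = ∑ k, ((nsize k:ℝ) * y k)^2 := by
      rw [euc_norm_sq]
      rfl
    have hge1 : (nmin:ℝ) * ‖x‖^2 ≤ ‖w'‖^2 := by
      rw [hnormx, hw2, Finset.mul_sum]
      apply Finset.sum_le_sum
      intro k _
      have h1 := hnmin_le k
      have h4 : (nmin:ℝ) * ((nsize k:ℝ) * (y k)^2) ≤ (nsize k:ℝ) * ((nsize k:ℝ) * (y k)^2) :=
        mul_le_mul_of_nonneg_right h1 (by positivity)
      calc (nmin:ℝ) * ((nsize k:ℝ) * (y k)^2)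
          ≤ (nsize k:ℝ) * ((nsize k:ℝ) * (y k)^2) := h4
        _ = ((nsize k:ℝ) * y k)^2 := by ring
    have hnn : (0:ℝ) ≤ (nmin:ℝ) := Nat.cast_nonneg _
    have hAxge : ((nmin:ℝ) * mF) * ‖x‖ ≤ ‖toE ((Z * F * Zᵀ) *ᵥ x0)‖ := by
      apply le_of_sq_le_sq' (norm_nonneg _) _
        (mul_nonneg (mul_nonneg hnn hm0) (norm_nonneg x))
      have hs1 : (nmin:ℝ) * (∑ k, ((F *ᵥ w) k)^2) ≤ ∑ k, (nsize k:ℝ) * ((F *ᵥ w) k)^2 := by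
        rw [Finset.mul_sum]
        exact Finset.sum_le_sum fun k _ =>
          mul_le_mul_of_nonneg_right (hnmin_le k) (sq_nonneg _)
      have hs2 : (mF * ‖w'‖)^2 ≤ ‖toE (F.mulVec w')‖^2 :=
        pow_le_pow_left₀ (mul_nonneg hm0 (norm_nonneg w')) hFw' 2
      rw [hnormAx]
      have t1 : (((nmin:ℝ)*mF)*‖x‖)^2 = (nmin:ℝ)*mF^2*((nmin:ℝ)*‖x‖^2) := by ring
      have t2 : (nmin:ℝ)*mF^2*((nmin:ℝ)*‖x‖^2) ≤ (nmin:ℝ)*mF^2*‖w'‖^2 :=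
        mul_le_mul_of_nonneg_left hge1 (mul_nonneg hnn (sq_nonneg mF))
      have t3 : (nmin:ℝ)*mF^2*‖w'‖^2 ≤ (nmin:ℝ)*‖toE (F.mulVec w')‖^2 := by
        have h4 := mul_le_mul_of_nonneg_left hs2 hnn
        calc (nmin:ℝ)*mF^2*‖w'‖^2 = (nmin:ℝ)*((mF*‖w'‖)^2) := by ring
          _ ≤ (nmin:ℝ)*‖toE (F.mulVec w')‖^2 := h4
      have t4 : (nmin:ℝ)*‖toE (F.mulVec w')‖^2 ≤ ∑ k, (nsize k:ℝ) * ((F *ᵥ w) k)^2 := by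
        rw [hFw2]
        exact hs1
      linarith
    -- upper bound via eigenvalues
    have hcond2 : ∀ i, |e cK| < |μ i| → v.repr x i = 0 := by
      intro i hi
      have hμi : μ i = e (σ.symm i) := by rw [heμ (σ.symm i), Equiv.apply_symm_apply]
      have hjlt : ((σ.symm i : Fin n) : ℕ) < K - 1 := by
        by_contra hge
        push_neg at hge
        have hle : cK ≤ σ.symm i := by
          rw [hcK]
          exact hge
        have h5 : |e (σ.symm i)| ≤ |e cK| := hdec hle
        rw [← hμi] at h5
        linarith
      have hji : σ (cast2 ⟨((σ.symm i : Fin n) : ℕ), hjlt⟩) = i := by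
        have h6 : cast2 ⟨((σ.symm i : Fin n) : ℕ), hjlt⟩ = σ.symm i := by
          rw [hcast2]
          exact Fin.ext rfl
        rw [h6, Equiv.apply_symm_apply]
      rw [← hji]
      exact hker _
    have hEup : ‖toE (E.mulVec x)‖ ≤ |e cK| * ‖x‖ :=
      norm_mulVec_le E hEherm (|e cK|) (abs_nonneg _) x hcond2
    have hElow : ((nmin:ℝ)*mF - d) * ‖x‖ ≤ ‖toE (E.mulVec x)‖ := by
      have hEx2 : toE (E.mulVec x) = toE ((Z * F * Zᵀ) *ᵥ x0)
          - toE ((Matrix.diagonal (fun u => (Z * F * Zᵀ) u u)) *ᵥ x0) := by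
        rw [show E.mulVec x = E *ᵥ x0 from rfl, hE, Matrix.sub_mulVec]
        rfl
      have h7 : ‖toE ((Z * F * Zᵀ) *ᵥ x0)‖
          - ‖toE ((Matrix.diagonal (fun u => (Z * F * Zᵀ) u u)) *ᵥ x0)‖
          ≤ ‖toE (E.mulVec x)‖ := by
        rw [hEx2]
        exact norm_sub_norm_le _ _
      have hDle : ‖toE ((Matrix.diagonal (fun u => (Z * F * Zᵀ) u u)) *ᵥ x0)‖ ≤ d * ‖x‖ :=
        diag_norm_le _ d hd0 hgd x
      have h8 : ((nmin:ℝ)*mF - d) * ‖x‖ = ((nmin:ℝ)*mF) * ‖x‖ - d * ‖x‖ := by ring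
      linarith
    have hfin : (nmin:ℝ)*mF - d ≤ |e cK| :=
      le_of_mul_le_mul_right (le_trans hElow hEup) hxpos
    exact hfin
end
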